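/- arXiv:2010.06794 — 7 statements merged into one kernel-verified Lean document; each statement's English description precedes it below -/
import Mathlib

section
/- Let P be a symmetric positive semidefinite n×n real matrix, E an n×d real matrix, g ∈ ℝⁿ, z ∈ ℝ, α ∈ (0,1) and λ > 0 such that λI − αEᵀPE is positive definite. For fixed v ∈ ℝⁿ and ŵ ∈ ℝ^d define Φ(w) = α(v+Ew)ᵀP(v+Ew) + αgᵀ(v+Ew) + αz − λ‖w−ŵ‖². Then the supremum of Φ over ℝ^d equals αvᵀPv + αgᵀv + αz − λ‖ŵ‖² − (αEᵀPv + ½αEᵀg + λŵ)ᵀ(αEᵀPE − λI)⁻¹(αEᵀPv + ½αEᵀg + λŵ). -/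
open Matrix

/-- closed form of the supremum of
`Φ(w) = α(v+Ew)ᵀP(v+Ew) + αgᵀ(v+Ew) + αz − λ‖w−ŵ‖²` over `w ∈ ℝ^d`. -/
theorem stmt1 {n d : ℕ} (P : Matrix (Fin n) (Fin n) ℝ) (E : Matrix (Fin n) (Fin d) ℝ)
    (g : Fin n → ℝ) (z : ℝ) (α lam : ℝ) (hα : α ∈ Set.Ioo (0 : ℝ) 1) (hlam : 0 < lam)
    (hP : P.PosSemidef)
    (hpd : (lam • (1 : Matrix (Fin d) (Fin d) ℝ) - α • (Eᵀ * P * E)).PosDef)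
    (v : Fin n → ℝ) (what : Fin d → ℝ)
    (Φ : (Fin d → ℝ) → ℝ)
    (hΦ : Φ = fun w => α * ((v + E *ᵥ w) ⬝ᵥ (P *ᵥ (v + E *ᵥ w)))
        + α * (g ⬝ᵥ (v + E *ᵥ w)) + α * z - lam * ((w - what) ⬝ᵥ (w - what))) :
    (⨆ w : Fin d → ℝ, Φ w) =
      α * (v ⬝ᵥ (P *ᵥ v)) + α * (g ⬝ᵥ v) + α * z - lam * (what ⬝ᵥ what)
        - (α • (Eᵀ *ᵥ (P *ᵥ v)) + (α / 2) • (Eᵀ *ᵥ g) + lam • what) ⬝ᵥ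
            ((α • (Eᵀ * P * E) - lam • (1 : Matrix (Fin d) (Fin d) ℝ))⁻¹ *ᵥ
              (α • (Eᵀ *ᵥ (P *ᵥ v)) + (α / 2) • (Eᵀ *ᵥ g) + lam • what)) := by
  set M : Matrix (Fin d) (Fin d) ℝ := lam • (1 : Matrix (Fin d) (Fin d) ℝ) - α • (Eᵀ * P * E)
    with hMdef
  set b : Fin d → ℝ := α • (Eᵀ *ᵥ (P *ᵥ v)) + (α / 2) • (Eᵀ *ᵥ g) + lam • what with hbdef
  set c : ℝ := α * (v ⬝ᵥ (P *ᵥ v)) + α * (g ⬝ᵥ v) + α * z - lam * (what ⬝ᵥ what) with hcdef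
  -- basic facts about M
  have hMsymm : Mᵀ = M := by
    have := hpd.1
    simpa [Matrix.IsHermitian] using this
  have hdet : IsUnit M.det := isUnit_iff_ne_zero.mpr (ne_of_gt hpd.det_pos)
  have hMinv : M * M⁻¹ = 1 := Matrix.mul_nonsing_inv M hdet
  set wstar : Fin d → ℝ := M⁻¹ *ᵥ b with hwstar
  have hMw : M *ᵥ wstar = b := by
    rw [hwstar, Matrix.mulVec_mulVec, hMinv, Matrix.one_mulVec]
  -- helper: moving E across a dot product
  have hE : ∀ (x : Fin n → ℝ) (w : Fin d → ℝ), x ⬝ᵥ (E *ᵥ w) = (Eᵀ *ᵥ x) ⬝ᵥ w := by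
    intro x w
    rw [Matrix.mulVec_transpose, ← Matrix.dotProduct_mulVec]
  -- helper: symmetry of P
  have hPs : ∀ (x y : Fin n → ℝ), x ⬝ᵥ (P *ᵥ y) = (P *ᵥ x) ⬝ᵥ y := by
    intro x y
    have hPt : Pᵀ = P := by simpa [Matrix.IsHermitian] using hP.1
    rw [Matrix.dotProduct_mulVec, ← Matrix.vecMul_transpose, hPt]
  -- helper: symmetry of M
  have hMs : ∀ (x y : Fin d → ℝ), x ⬝ᵥ (M *ᵥ y) = y ⬝ᵥ (M *ᵥ x) := by
    intro x y
    rw [Matrix.dotProduct_mulVec, ← Matrix.vecMul_transpose, hMsymm, dotProduct_comm]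
  -- quadratic form of Φ
  have hquad : ∀ w : Fin d → ℝ, Φ w = c + 2 * (b ⬝ᵥ w) - w ⬝ᵥ (M *ᵥ w) := by
    intro w
    have e1 : v ⬝ᵥ (P *ᵥ (E *ᵥ w)) = (Eᵀ *ᵥ (P *ᵥ v)) ⬝ᵥ w := by
      rw [hPs, hE]
    have e2 : (E *ᵥ w) ⬝ᵥ (P *ᵥ v) = (Eᵀ *ᵥ (P *ᵥ v)) ⬝ᵥ w := by
      rw [dotProduct_comm, hE]
    have e3 : (E *ᵥ w) ⬝ᵥ (P *ᵥ (E *ᵥ w)) = w ⬝ᵥ ((Eᵀ * P * E) *ᵥ w) := by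
      rw [dotProduct_comm, hE, Matrix.mulVec_mulVec, Matrix.mulVec_mulVec, dotProduct_comm]
    have e4 : g ⬝ᵥ (E *ᵥ w) = (Eᵀ *ᵥ g) ⬝ᵥ w := hE g w
    have e5 : w ⬝ᵥ (M *ᵥ w) = lam * (w ⬝ᵥ w) - α * (w ⬝ᵥ ((Eᵀ * P * E) *ᵥ w)) := by
      rw [hMdef, Matrix.sub_mulVec, Matrix.smul_mulVec, Matrix.smul_mulVec,
        Matrix.one_mulVec, dotProduct_sub, dotProduct_smul, dotProduct_smul, smul_eq_mul,
        smul_eq_mul]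
    have e6 : b ⬝ᵥ w = α * ((Eᵀ *ᵥ (P *ᵥ v)) ⬝ᵥ w) + (α / 2) * ((Eᵀ *ᵥ g) ⬝ᵥ w)
        + lam * (what ⬝ᵥ w) := by
      rw [hbdef, add_dotProduct, add_dotProduct, smul_dotProduct, smul_dotProduct,
        smul_dotProduct, smul_eq_mul, smul_eq_mul, smul_eq_mul]
    have e7 : w ⬝ᵥ what = what ⬝ᵥ w := dotProduct_comm _ _
    rw [hΦ]
    simp only [Matrix.mulVec_add, dotProduct_add, add_dotProduct, dotProduct_sub,
      sub_dotProduct]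
    rw [e5, e6, e1, e2, e3, e4, e7, hcdef]
    ring
  -- Φ is maximized at wstar
  have hnn : ∀ x : Fin d → ℝ, 0 ≤ x ⬝ᵥ (M *ᵥ x) := by
    intro x
    have := hpd.posSemidef.dotProduct_mulVec_nonneg x
    simpa using this
  have key : ∀ w : Fin d → ℝ, Φ w = Φ wstar - ((w - wstar) ⬝ᵥ (M *ᵥ (w - wstar))) := by
    intro w
    have expand : (w - wstar) ⬝ᵥ (M *ᵥ (w - wstar))
        = w ⬝ᵥ (M *ᵥ w) - 2 * (b ⬝ᵥ w) + b ⬝ᵥ wstar := by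
      rw [Matrix.mulVec_sub, dotProduct_sub, sub_dotProduct, sub_dotProduct,
        hMs wstar w, hMw, dotProduct_comm w b, dotProduct_comm wstar b]
      ring
    have hws : wstar ⬝ᵥ (M *ᵥ wstar) = b ⬝ᵥ wstar := by
      rw [hMw, dotProduct_comm]
    rw [hquad w, hquad wstar, expand, hws]
    ring
  have hle : ∀ w : Fin d → ℝ, Φ w ≤ Φ wstar := by
    intro w
    rw [key w]
    exact sub_le_self _ (hnn _)
  have hsup : (⨆ w : Fin d → ℝ, Φ w) = Φ wstar := by
    apply le_antisymm
    · exact ciSup_le hle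
    · exact le_ciSup ⟨Φ wstar, by rintro _ ⟨w, rfl⟩; exact hle w⟩ wstar
  -- compute Φ wstar and relate to the inverse of the negated matrix
  have hNinv : (α • (Eᵀ * P * E) - lam • (1 : Matrix (Fin d) (Fin d) ℝ))⁻¹ = -(M⁻¹) := by
    apply Matrix.inv_eq_right_inv
    have : α • (Eᵀ * P * E) - lam • (1 : Matrix (Fin d) (Fin d) ℝ) = -M := by
      rw [hMdef]; abel
    rw [this, Matrix.neg_mul, Matrix.mul_neg, neg_neg, hMinv]
  rw [hsup, hquad wstar, hNinv]
  have hws : wstar ⬝ᵥ (M *ᵥ wstar) = b ⬝ᵥ wstar := by rw [hMw, dotProduct_comm]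
  rw [hws]
  rw [Matrix.neg_mulVec, dotProduct_neg]
  rw [← hwstar]
  ring
end

section
/- Let A be an n×n, B an n×m, and E an n×d real matrix; Q a symmetric positive semidefinite n×n matrix, R a symmetric positive definite m×m matrix, α ∈ (0,1), λ > 0; let P be a symmetric positive semidefinite n×n matrix with λI − αEᵀPE positive definite, g ∈ ℝⁿ, and ŵ⁽¹⁾,…,ŵ⁽ᴺ⁾ ∈ ℝ^d with sample mean w̄ = (1/N)Σ_{j=1}^N ŵ⁽ʲ⁾. Define H_xx = Q + αAᵀPA, H_xu = αAᵀPB, H_xw = αAᵀPE, H_uu = R + αBᵀPB, H_uw = αBᵀPE, H_ww = αEᵀPE − λI, G_u = αBᵀg, G_w = αEᵀg + 2λw̄. Fix x ∈ ℝⁿ and define F(u) = xᵀQx + uᵀRu + (1/N)Σ_{j=1}^N sup_{w∈ℝ^d} [ α(Ax+Bu+Ew)ᵀP(Ax+Bu+Ew) + αgᵀ(Ax+Bu+Ew) − λ‖w−ŵ⁽ʲ⁾‖² ]. Then F is strictly convex on ℝ^m and has the unique minimizer u* = Kx + r, where K = (H_uu − H_uw H_ww⁻¹ H_uwᵀ)⁻¹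 (H_uw H_ww⁻¹ H_xwᵀ − H_xuᵀ) and r = −½ (H_uu − H_uw H_ww⁻¹ H_uwᵀ)⁻¹ (G_u − H_uw H_ww⁻¹ G_w). -/
open Matrix


section Stmt3Aux
variable {k l d m : ℕ}

lemma mv_dot (A : Matrix (Fin k) (Fin l) ℝ) (v : Fin l → ℝ) (z : Fin k → ℝ) :
    (A *ᵥ v) ⬝ᵥ z = v ⬝ᵥ (Aᵀ *ᵥ z) := by
  rw [dotProduct_comm, dotProduct_mulVec, ← mulVec_transpose, dotProduct_comm,
    dotProduct_mulVec, ← mulVec_transpose, transpose_transpose]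

lemma dot_symm (M : Matrix (Fin d) (Fin d) ℝ) (hM : Mᵀ = M) (v w : Fin d → ℝ) :
    v ⬝ᵥ (M *ᵥ w) = w ⬝ᵥ (M *ᵥ v) := by
  rw [dotProduct_mulVec, ← mulVec_transpose, hM, dotProduct_comm]

lemma trans3 (B : Matrix (Fin k) (Fin m) ℝ) (P : Matrix (Fin k) (Fin k) ℝ)
    (hP : Pᵀ = P) (E : Matrix (Fin k) (Fin d) ℝ) (u : Fin m → ℝ) (z : Fin d → ℝ) :
    u ⬝ᵥ (Bᵀ *ᵥ (P *ᵥ (E *ᵥ z))) = z ⬝ᵥ (Eᵀ *ᵥ (P *ᵥ (B *ᵥ u))) := by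
  rw [← mv_dot B u, dot_symm P hP, mv_dot E z]

lemma dot_sum {N : ℕ} (v : Fin k → ℝ) (w : Fin N → Fin k → ℝ) :
    v ⬝ᵥ (∑ j, w j) = ∑ j, v ⬝ᵥ w j := by
  simp only [dotProduct, Finset.sum_apply, Finset.mul_sum]
  exact Finset.sum_comm

lemma mv_sum {N : ℕ} (M : Matrix (Fin k) (Fin l) ℝ) (w : Fin N → Fin l → ℝ) :
    M *ᵥ (∑ j, w j) = ∑ j, M *ᵥ w j := by
  ext i
  simp only [mulVec, dotProduct, Finset.sum_apply, Finset.mul_sum]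
  exact Finset.sum_comm

lemma psd_smul (M : Matrix (Fin k) (Fin k) ℝ) (h : M.PosSemidef) (c : ℝ) (hc : 0 ≤ c) :
    (c • M).PosSemidef := by
  constructor
  · show (c • M)ᴴ = c • M
    rw [conjTranspose_smul, h.1.eq]
    norm_num
  · intro x
    exact (h.smul hc).2 x

lemma quad_shift (Wm : Matrix (Fin d) (Fin d) ℝ) (hW : Wmᵀ = Wm) (p q : Fin d → ℝ)
    (cst : ℝ) :
    (p + cst • q) ⬝ᵥ Wm *ᵥ (p + cst • q)
      = p ⬝ᵥ Wm *ᵥ p + 2*cst*(p ⬝ᵥ Wm *ᵥ q) + cst^2 * (q ⬝ᵥ Wm *ᵥ q) := by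
  simp only [mulVec_add, mulVec_smul, dotProduct_add, add_dotProduct,
    dotProduct_smul, smul_dotProduct, smul_eq_mul]
  rw [dot_symm Wm hW q p]; ring

lemma quad3 (Wm : Matrix (Fin d) (Fin d) ℝ) (hW : Wmᵀ = Wm) (a b c : ℝ)
    (p q s : Fin d → ℝ) :
    (a • p + b • q + c • s) ⬝ᵥ Wm *ᵥ (a • p + b • q + c • s)
      = a^2 * (p ⬝ᵥ Wm *ᵥ p) + b^2 * (q ⬝ᵥ Wm *ᵥ q) + c^2 * (s ⬝ᵥ Wm *ᵥ s)
        + 2*a*b*(p ⬝ᵥ Wm *ᵥ q) + 2*a*c*(s ⬝ᵥ Wm *ᵥ p) + 2*b*c*(s ⬝ᵥ Wm *ᵥ q) := by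
  simp only [mulVec_add, mulVec_smul, dotProduct_add, add_dotProduct,
    dotProduct_smul, smul_dotProduct, smul_eq_mul]
  rw [dot_symm Wm hW q p, dot_symm Wm hW p s, dot_symm Wm hW q s]; ring

lemma lin3 (Wm : Matrix (Fin d) (Fin d) ℝ) (a b c : ℝ) (p q s z : Fin d → ℝ) :
    (a • p + b • q + c • s) ⬝ᵥ Wm *ᵥ z
      = a*(p ⬝ᵥ Wm *ᵥ z) + b*(q ⬝ᵥ Wm *ᵥ z) + c*(s ⬝ᵥ Wm *ᵥ z) := by
  simp only [add_dotProduct, smul_dotProduct, smul_eq_mul]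
end Stmt3Aux

section Aux2
lemma sup_quadratic (M : Matrix (Fin d) (Fin d) ℝ) (hM : Mᵀ = M)
    (hneg : (-M).PosDef) (b : Fin d → ℝ) (c : ℝ) :
    ⨆ w : Fin d → ℝ, (w ⬝ᵥ M *ᵥ w + b ⬝ᵥ w + c) = c - (1/4) * (b ⬝ᵥ M⁻¹ *ᵥ b) := by
  have hdet : IsUnit M.det := by
    have h1 : 0 < (-M).det := hneg.det_pos
    have h2 : M.det ≠ 0 := by
      intro h
      rw [show (-M) = (-1 : ℝ) • M by simp, det_smul, h, mul_zero] at h1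
      exact lt_irrefl 0 h1
    exact isUnit_iff_ne_zero.mpr h2
  have hMinv : M * M⁻¹ = 1 := mul_nonsing_inv M hdet
  set w0 : Fin d → ℝ := (-(1/2 : ℝ)) • (M⁻¹ *ᵥ b) with hw0
  have hMw0 : M *ᵥ w0 = (-(1/2 : ℝ)) • b := by
    rw [hw0, mulVec_smul, mulVec_mulVec, hMinv, one_mulVec]
  have key : ∀ w, w ⬝ᵥ M *ᵥ w + b ⬝ᵥ w + c
      = (w - w0) ⬝ᵥ M *ᵥ (w - w0) + (c - (1/4) * (b ⬝ᵥ M⁻¹ *ᵥ b)) := by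
    intro w
    have h1 : (w - w0) ⬝ᵥ M *ᵥ (w - w0)
        = w ⬝ᵥ M *ᵥ w - w0 ⬝ᵥ M *ᵥ w - w ⬝ᵥ M *ᵥ w0 + w0 ⬝ᵥ M *ᵥ w0 := by
      simp only [mulVec_sub, dotProduct_sub, sub_dotProduct]
      ring
    have h2 : w0 ⬝ᵥ M *ᵥ w = w ⬝ᵥ M *ᵥ w0 := dot_symm M hM w0 w
    have h3 : w ⬝ᵥ M *ᵥ w0 = (-(1/2 : ℝ)) * (b ⬝ᵥ w) := by
      rw [hMw0, dotProduct_smul, smul_eq_mul, dotProduct_comm]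
    have h4 : w0 ⬝ᵥ M *ᵥ w0 = (1/4 : ℝ) * (b ⬝ᵥ M⁻¹ *ᵥ b) := by
      rw [hMw0, dotProduct_smul, hw0, smul_dotProduct, smul_eq_mul, smul_eq_mul,
        dotProduct_comm]
      ring
    rw [h1, h2, h3, h4]; ring
  have hle : ∀ w, w ⬝ᵥ M *ᵥ w + b ⬝ᵥ w + c ≤ c - (1/4) * (b ⬝ᵥ M⁻¹ *ᵥ b) := by
    intro w
    rw [key w]
    have h5 : 0 ≤ (w - w0) ⬝ᵥ (-M) *ᵥ (w - w0) := by
      have := hneg.posSemidef.dotProduct_mulVec_nonneg (w - w0); simpa using this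
    have h6 : (w - w0) ⬝ᵥ (-M) *ᵥ (w - w0) = -((w - w0) ⬝ᵥ M *ᵥ (w - w0)) := by
      rw [neg_mulVec, dotProduct_neg]
    linarith
  apply le_antisymm
  · exact ciSup_le hle
  · have hb : BddAbove (Set.range fun w : Fin d → ℝ => w ⬝ᵥ M *ᵥ w + b ⬝ᵥ w + c) := by
      refine ⟨c - (1/4) * (b ⬝ᵥ M⁻¹ *ᵥ b), ?_⟩
      rintro y ⟨w, rfl⟩; exact hle w
    have h7 := le_ciSup hb w0
    have h8 : w0 ⬝ᵥ M *ᵥ w0 + b ⬝ᵥ w0 + c = c - (1/4) * (b ⬝ᵥ M⁻¹ *ᵥ b) := by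
      rw [key w0]; simp
    linarith

lemma quad_min (S : Matrix (Fin m) (Fin m) ℝ) (hS : Sᵀ = S) (hpd : S.PosDef)
    (t : Fin m → ℝ) (c : ℝ) (f : (Fin m → ℝ) → ℝ)
    (hf : ∀ u, f u = u ⬝ᵥ S *ᵥ u + t ⬝ᵥ u + c)
    (u0 : Fin m → ℝ) (hu0 : S *ᵥ u0 = (-(1/2 : ℝ)) • t) :
    StrictConvexOn ℝ Set.univ f ∧ IsMinOn f Set.univ u0 ∧
      ∀ u, u ≠ u0 → f u0 < f u := by
  have hq : ∀ p q : Fin m → ℝ, p ⬝ᵥ S *ᵥ q = q ⬝ᵥ S *ᵥ p := dot_symm S hS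
  have hqpos : ∀ p : Fin m → ℝ, p ≠ 0 → 0 < p ⬝ᵥ S *ᵥ p := by
    intro p hp
    have := hpd.dotProduct_mulVec_pos hp; simpa using this
  have key : ∀ u, f u = (u - u0) ⬝ᵥ S *ᵥ (u - u0) + f u0 := by
    intro u
    have h1 : (u - u0) ⬝ᵥ S *ᵥ (u - u0)
        = u ⬝ᵥ S *ᵥ u - 2 * (u ⬝ᵥ S *ᵥ u0) + u0 ⬝ᵥ S *ᵥ u0 := by
      simp only [mulVec_sub, dotProduct_sub, sub_dotProduct]
      rw [hq u0 u]; ring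
    have h2 : u ⬝ᵥ S *ᵥ u0 = -(1/2 : ℝ) * (t ⬝ᵥ u) := by
      rw [hu0, dotProduct_smul, smul_eq_mul, dotProduct_comm]
    have h3 : u0 ⬝ᵥ S *ᵥ u0 = -(1/2 : ℝ) * (t ⬝ᵥ u0) := by
      rw [hu0, dotProduct_smul, smul_eq_mul, dotProduct_comm]
    rw [hf u, hf u0, h1, h2, h3]; ring
  refine ⟨⟨convex_univ, ?_⟩, ?_, ?_⟩
  · intro u _ v _ huv a b ha hb hab
    simp only [hf, smul_eq_mul]
    have expand : (a • u + b • v) ⬝ᵥ S *ᵥ (a • u + b • v)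
        = a^2 * (u ⬝ᵥ S *ᵥ u) + 2*a*b*(u ⬝ᵥ S *ᵥ v) + b^2 * (v ⬝ᵥ S *ᵥ v) := by
      simp only [mulVec_add, mulVec_smul, dotProduct_add, add_dotProduct,
        dotProduct_smul, smul_dotProduct, smul_eq_mul]
      rw [hq v u]; ring
    have expand2 : (u - v) ⬝ᵥ S *ᵥ (u - v)
        = u ⬝ᵥ S *ᵥ u - 2 * (u ⬝ᵥ S *ᵥ v) + v ⬝ᵥ S *ᵥ v := by
      simp only [mulVec_sub, dotProduct_sub, sub_dotProduct]
      rw [hq v u]; ring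
    have hpos : 0 < (u - v) ⬝ᵥ S *ᵥ (u - v) := hqpos _ (sub_ne_zero.mpr huv)
    have hlin : t ⬝ᵥ (a • u + b • v) = a * (t ⬝ᵥ u) + b * (t ⬝ᵥ v) := by
      simp only [dotProduct_add, dotProduct_smul, smul_eq_mul]
    rw [expand, hlin]
    have hdiff : a * (u ⬝ᵥ S *ᵥ u + t ⬝ᵥ u + c) + b * (v ⬝ᵥ S *ᵥ v + t ⬝ᵥ v + c)
        - (a^2 * (u ⬝ᵥ S *ᵥ u) + 2*a*b*(u ⬝ᵥ S *ᵥ v) + b^2 * (v ⬝ᵥ S *ᵥ v)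
          + (a * (t ⬝ᵥ u) + b * (t ⬝ᵥ v)) + c)
        = a * b * ((u - v) ⬝ᵥ S *ᵥ (u - v)) := by
      rw [expand2]
      have hb' : b = 1 - a := by linarith
      rw [hb']; ring
    linarith [mul_pos (mul_pos ha hb) hpos, hdiff]
  · intro u _
    have h := key u
    have hnn : 0 ≤ (u - u0) ⬝ᵥ S *ᵥ (u - u0) := by
      have := hpd.posSemidef.dotProduct_mulVec_nonneg (u - u0); simpa using this
    simp only [Set.mem_setOf_eq]
    linarith [key u]
  · intro u hu
    have hpos : 0 < (u - u0) ⬝ᵥ S *ᵥ (u - u0) := hqpos _ (sub_ne_zero.mpr hu)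
    linarith [key u]
end Aux2

/-- the one-step Bellman minimization
`F(u) = xᵀQx + uᵀRu + (1/N)Σⱼ sup_w [α(Ax+Bu+Ew)ᵀP(Ax+Bu+Ew) + αgᵀ(Ax+Bu+Ew) − λ‖w−ŵ⁽ʲ⁾‖²]`
is strictly convex with unique minimizer `u* = Kx + r`. -/
theorem stmt3 {n m d N : ℕ} (hN : 0 < N)
    (A : Matrix (Fin n) (Fin n) ℝ) (B : Matrix (Fin n) (Fin m) ℝ)
    (E : Matrix (Fin n) (Fin d) ℝ)
    (Q : Matrix (Fin n) (Fin n) ℝ) (R : Matrix (Fin m) (Fin m) ℝ)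
    (α lam : ℝ) (hα : α ∈ Set.Ioo (0 : ℝ) 1) (hlam : 0 < lam)
    (hQ : Q.PosSemidef) (hR : R.PosDef)
    (P : Matrix (Fin n) (Fin n) ℝ) (hP : P.PosSemidef)
    (hpd : (lam • (1 : Matrix (Fin d) (Fin d) ℝ) - α • (Eᵀ * P * E)).PosDef)
    (g : Fin n → ℝ) (what : Fin N → Fin d → ℝ)
    (wbar : Fin d → ℝ) (hwbar : wbar = (1 / (N : ℝ)) • ∑ j, what j)
    -- the blocks
    (Hxx : Matrix (Fin n) (Fin n) ℝ) (Hxu : Matrix (Fin n) (Fin m) ℝ)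
    (Hxw : Matrix (Fin n) (Fin d) ℝ) (Huu : Matrix (Fin m) (Fin m) ℝ)
    (Huw : Matrix (Fin m) (Fin d) ℝ) (Hww : Matrix (Fin d) (Fin d) ℝ)
    (Gu : Fin m → ℝ) (Gw : Fin d → ℝ)
    (hHxx : Hxx = Q + α • (Aᵀ * P * A)) (hHxu : Hxu = α • (Aᵀ * P * B))
    (hHxw : Hxw = α • (Aᵀ * P * E)) (hHuu : Huu = R + α • (Bᵀ * P * B))
    (hHuw : Huw = α • (Bᵀ * P * E))
    (hHww : Hww = α • (Eᵀ * P * E) - lam • (1 : Matrix (Fin d) (Fin d) ℝ))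
    (hGu : Gu = α • (Bᵀ *ᵥ g)) (hGw : Gw = α • (Eᵀ *ᵥ g) + (2 * lam) • wbar)
    -- the state, the objective and the claimed minimizer
    (x : Fin n → ℝ) (F : (Fin m → ℝ) → ℝ)
    (hF : F = fun u => x ⬝ᵥ (Q *ᵥ x) + u ⬝ᵥ (R *ᵥ u) +
      (1 / (N : ℝ)) * ∑ j, ⨆ w : Fin d → ℝ,
        (α * ((A *ᵥ x + B *ᵥ u + E *ᵥ w) ⬝ᵥ (P *ᵥ (A *ᵥ x + B *ᵥ u + E *ᵥ w)))
          + α * (g ⬝ᵥ (A *ᵥ x + B *ᵥ u + E *ᵥ w))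
          - lam * ((w - what j) ⬝ᵥ (w - what j))))
    (K : Matrix (Fin m) (Fin n) ℝ) (r : Fin m → ℝ)
    (hK : K = (Huu - Huw * Hww⁻¹ * Huwᵀ)⁻¹ * (Huw * Hww⁻¹ * Hxwᵀ - Hxuᵀ))
    (hr : r = (-(1 : ℝ) / 2) • ((Huu - Huw * Hww⁻¹ * Huwᵀ)⁻¹ *ᵥ
      (Gu - (Huw * Hww⁻¹) *ᵥ Gw)))
    (ustar : Fin m → ℝ) (hustar : ustar = K *ᵥ x + r) :
    StrictConvexOn ℝ Set.univ F ∧ IsMinOn F Set.univ ustar ∧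
      ∀ u, u ≠ ustar → F ustar < F u := by
  have hα0 : (0 : ℝ) < α := hα.1
  have hP' : Pᵀ = P := hP.1
  have hR' : Rᵀ = R := hR.1
  have hNne : (N : ℝ) ≠ 0 := Nat.cast_ne_zero.mpr hN.ne'
  -- symmetry and definiteness facts about Hww
  have hHwwsymm : Hwwᵀ = Hww := by
    rw [hHww]
    simp [transpose_sub, transpose_smul, transpose_mul, transpose_one,
      transpose_transpose, hP', Matrix.mul_assoc]
  have hnegHww : (-Hww).PosDef := by
    rw [hHww, neg_sub]; exact hpd
  have hdetHww : IsUnit Hww.det := by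
    have h1 : 0 < (-Hww).det := hnegHww.det_pos
    have h2 : Hww.det ≠ 0 := by
      intro h
      rw [show (-Hww) = (-1 : ℝ) • Hww by simp, det_smul, h, mul_zero] at h1
      exact lt_irrefl 0 h1
    exact isUnit_iff_ne_zero.mpr h2
  have hWsymm : (Hww⁻¹)ᵀ = Hww⁻¹ := by rw [transpose_nonsing_inv, hHwwsymm]
  have hnegW : (-(Hww⁻¹)).PosDef := by
    have h1 : (-Hww)⁻¹ = -(Hww⁻¹) := by
      apply inv_eq_right_inv
      rw [Matrix.neg_mul, Matrix.mul_neg, neg_neg, mul_nonsing_inv _ hdetHww]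
    rw [← h1]; exact hnegHww.inv
  -- the matrix S of the reduced quadratic
  have hHuuT : Huuᵀ = Huu := by
    rw [hHuu]
    simp [transpose_add, transpose_smul, transpose_mul, transpose_transpose,
      hP', hR', Matrix.mul_assoc]
  have hHuwT : Huwᵀ = α • (Eᵀ * (P * B)) := by
    rw [hHuw, transpose_smul, transpose_mul, transpose_mul, transpose_transpose, hP']
  have hHxuT : Hxuᵀ = α • (Bᵀ * (P * A)) := by
    rw [hHxu, transpose_smul, transpose_mul, transpose_mul, transpose_transpose, hP']
  have hHxwT : Hxwᵀ = α • (Eᵀ * (P * A)) := by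
    rw [hHxw, transpose_smul, transpose_mul, transpose_mul, transpose_transpose, hP']
  have hSsymm : (Huu - Huw * Hww⁻¹ * Huwᵀ)ᵀ = Huu - Huw * Hww⁻¹ * Huwᵀ := by
    simp [transpose_sub, transpose_mul, transpose_transpose, hHuuT, hWsymm,
      Matrix.mul_assoc]
  have hSpd : (Huu - Huw * Hww⁻¹ * Huwᵀ).PosDef := by
    have hBT : ∀ {p q : ℕ} (M : Matrix (Fin p) (Fin q) ℝ), Mᴴ = Mᵀ := by
      intro p q M; ext i j; simp [conjTranspose_apply]
    have hBPB : ((α : ℝ) • (Bᵀ * P * B)).PosSemidef := by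
      apply psd_smul
      · have h1 := hP.mul_mul_conjTranspose_same Bᵀ
        rw [hBT Bᵀ, transpose_transpose] at h1
        exact h1
      · exact le_of_lt hα0
    have hHuupd : Huu.PosDef := by rw [hHuu]; exact hR.add_posSemidef hBPB
    have hpsd2 : (Huw * (-(Hww⁻¹)) * Huwᵀ).PosSemidef := by
      have h2 := hnegW.posSemidef.mul_mul_conjTranspose_same Huw
      rwa [hBT Huw] at h2
    have h3 : Huu - Huw * Hww⁻¹ * Huwᵀ = Huu + Huw * (-(Hww⁻¹)) * Huwᵀ := by
      rw [Matrix.mul_neg, Matrix.neg_mul, sub_eq_add_neg]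
    rw [h3]; exact hHuupd.add_posSemidef hpsd2
  have hSdet : IsUnit (Huu - Huw * Hww⁻¹ * Huwᵀ).det :=
    isUnit_iff_ne_zero.mpr (ne_of_gt hSpd.det_pos)
  have hSinv : (Huu - Huw * Hww⁻¹ * Huwᵀ) * (Huu - Huw * Hww⁻¹ * Huwᵀ)⁻¹ = 1 :=
    mul_nonsing_inv _ hSdet
  -- closed form of the inner supremum
  have hident : ∀ (u : Fin m → ℝ) (j : Fin N) (w : Fin d → ℝ),
      α * ((A *ᵥ x + B *ᵥ u + E *ᵥ w) ⬝ᵥ (P *ᵥ (A *ᵥ x + B *ᵥ u + E *ᵥ w)))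
        + α * (g ⬝ᵥ (A *ᵥ x + B *ᵥ u + E *ᵥ w))
        - lam * ((w - what j) ⬝ᵥ (w - what j))
      = w ⬝ᵥ Hww *ᵥ w
        + ((2*α) • (Eᵀ *ᵥ (P *ᵥ (A *ᵥ x))) + α • (Eᵀ *ᵥ g)
            + (2*α) • (Eᵀ *ᵥ (P *ᵥ (B *ᵥ u))) + (2*lam) • what j) ⬝ᵥ w
        + (α * ((A *ᵥ x + B *ᵥ u) ⬝ᵥ (P *ᵥ (A *ᵥ x + B *ᵥ u)))
            + α * (g ⬝ᵥ (A *ᵥ x + B *ᵥ u)) - lam * (what j ⬝ᵥ what j)) := by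
    intro u j w
    have hEPy : Eᵀ *ᵥ (P *ᵥ (A *ᵥ x + B *ᵥ u))
        = Eᵀ *ᵥ (P *ᵥ (A *ᵥ x)) + Eᵀ *ᵥ (P *ᵥ (B *ᵥ u)) := by
      rw [mulVec_add, mulVec_add]
    have eA : (A *ᵥ x + B *ᵥ u + E *ᵥ w) ⬝ᵥ (P *ᵥ (A *ᵥ x + B *ᵥ u + E *ᵥ w))
        = (A *ᵥ x + B *ᵥ u) ⬝ᵥ (P *ᵥ (A *ᵥ x + B *ᵥ u))
          + 2 * (w ⬝ᵥ (Eᵀ *ᵥ (P *ᵥ (A *ᵥ x + B *ᵥ u))))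
          + w ⬝ᵥ (Eᵀ *ᵥ (P *ᵥ (E *ᵥ w))) := by
      rw [mulVec_add P (A *ᵥ x + B *ᵥ u) (E *ᵥ w), dotProduct_add,
        add_dotProduct (A *ᵥ x + B *ᵥ u) (E *ᵥ w) (P *ᵥ (A *ᵥ x + B *ᵥ u)),
        add_dotProduct (A *ᵥ x + B *ᵥ u) (E *ᵥ w) (P *ᵥ (E *ᵥ w)), dot_symm P hP' (A *ᵥ x + B *ᵥ u) (E *ᵥ w),
        mv_dot E w (P *ᵥ (A *ᵥ x + B *ᵥ u)), mv_dot E w (P *ᵥ (E *ᵥ w))]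
      ring
    have eB : g ⬝ᵥ (A *ᵥ x + B *ᵥ u + E *ᵥ w)
        = g ⬝ᵥ (A *ᵥ x + B *ᵥ u) + w ⬝ᵥ (Eᵀ *ᵥ g) := by
      rw [dotProduct_add, dotProduct_comm g (E *ᵥ w), mv_dot E w g]
    have eC : (w - what j) ⬝ᵥ (w - what j)
        = w ⬝ᵥ w - 2 * (what j ⬝ᵥ w) + what j ⬝ᵥ what j := by
      simp only [dotProduct_sub, sub_dotProduct]
      rw [dotProduct_comm w (what j)]; ring
    have eD : w ⬝ᵥ Hww *ᵥ w
        = α * (w ⬝ᵥ (Eᵀ *ᵥ (P *ᵥ (E *ᵥ w)))) - lam * (w ⬝ᵥ w) := by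
      rw [hHww, sub_mulVec, smul_mulVec, smul_mulVec, one_mulVec,
        dotProduct_sub, dotProduct_smul, dotProduct_smul, smul_eq_mul, smul_eq_mul,
        ← mulVec_mulVec, ← mulVec_mulVec]
    have eE : ((2*α) • (Eᵀ *ᵥ (P *ᵥ (A *ᵥ x))) + α • (Eᵀ *ᵥ g)
          + (2*α) • (Eᵀ *ᵥ (P *ᵥ (B *ᵥ u))) + (2*lam) • what j) ⬝ᵥ w
        = (2*α) * (w ⬝ᵥ (Eᵀ *ᵥ (P *ᵥ (A *ᵥ x)))) + α * (w ⬝ᵥ (Eᵀ *ᵥ g))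
          + (2*α) * (w ⬝ᵥ (Eᵀ *ᵥ (P *ᵥ (B *ᵥ u)))) + (2*lam) * (what j ⬝ᵥ w) := by
      simp only [add_dotProduct, smul_dotProduct, smul_eq_mul]
      rw [dotProduct_comm (Eᵀ *ᵥ (P *ᵥ (A *ᵥ x))) w, dotProduct_comm (Eᵀ *ᵥ g) w,
        dotProduct_comm (Eᵀ *ᵥ (P *ᵥ (B *ᵥ u))) w]
    rw [eA, eB, eC, eD, eE, hEPy, dotProduct_add]
    ring
  have hsup : ∀ (u : Fin m → ℝ) (j : Fin N),
      (⨆ w : Fin d → ℝ,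
        (α * ((A *ᵥ x + B *ᵥ u + E *ᵥ w) ⬝ᵥ (P *ᵥ (A *ᵥ x + B *ᵥ u + E *ᵥ w)))
          + α * (g ⬝ᵥ (A *ᵥ x + B *ᵥ u + E *ᵥ w))
          - lam * ((w - what j) ⬝ᵥ (w - what j))))
      = (α * ((A *ᵥ x + B *ᵥ u) ⬝ᵥ (P *ᵥ (A *ᵥ x + B *ᵥ u)))
          + α * (g ⬝ᵥ (A *ᵥ x + B *ᵥ u)) - lam * (what j ⬝ᵥ what j))
        - (1/4) * (((2*α) • (Eᵀ *ᵥ (P *ᵥ (A *ᵥ x))) + α • (Eᵀ *ᵥ g)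
            + (2*α) • (Eᵀ *ᵥ (P *ᵥ (B *ᵥ u))) + (2*lam) • what j) ⬝ᵥ Hww⁻¹ *ᵥ
            ((2*α) • (Eᵀ *ᵥ (P *ᵥ (A *ᵥ x))) + α • (Eᵀ *ᵥ g)
            + (2*α) • (Eᵀ *ᵥ (P *ᵥ (B *ᵥ u))) + (2*lam) • what j)) := by
    intro u j
    simp only [hident u j]
    exact sup_quadratic Hww hHwwsymm hnegHww _ _
  -- the reduced quadratic objective
  have hFeq : ∀ u : Fin m → ℝ,
      F u = u ⬝ᵥ (Huu - Huw * Hww⁻¹ * Huwᵀ) *ᵥ u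
        + ((2:ℝ) • ((Hxuᵀ - Huw * Hww⁻¹ * Hxwᵀ) *ᵥ x)
            + (Gu - (Huw * Hww⁻¹) *ᵥ Gw)) ⬝ᵥ u
        + (x ⬝ᵥ Q *ᵥ x + α * ((A *ᵥ x) ⬝ᵥ P *ᵥ (A *ᵥ x)) + α * (g ⬝ᵥ (A *ᵥ x))
            - (1/4) * ((2*α)^2 * ((Eᵀ *ᵥ (P *ᵥ (A *ᵥ x))) ⬝ᵥ Hww⁻¹ *ᵥ (Eᵀ *ᵥ (P *ᵥ (A *ᵥ x))))
                + α^2 * ((Eᵀ *ᵥ g) ⬝ᵥ Hww⁻¹ *ᵥ (Eᵀ *ᵥ g))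
                + 2*(2*α)*α * ((Eᵀ *ᵥ (P *ᵥ (A *ᵥ x))) ⬝ᵥ Hww⁻¹ *ᵥ (Eᵀ *ᵥ g)))
            - lam * ((2*α) * ((Eᵀ *ᵥ (P *ᵥ (A *ᵥ x))) ⬝ᵥ Hww⁻¹ *ᵥ wbar) + α * ((Eᵀ *ᵥ g) ⬝ᵥ Hww⁻¹ *ᵥ wbar))
            - (lam / (N:ℝ)) * (∑ j, what j ⬝ᵥ what j)
            - (lam^2 / (N:ℝ)) * (∑ j, what j ⬝ᵥ Hww⁻¹ *ᵥ what j)) := by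
    intro u
    simp only [hF]
    rw [Finset.sum_congr rfl fun j _ => hsup u j]
    have hterm : ∀ j : Fin N,
        (α * ((A *ᵥ x + B *ᵥ u) ⬝ᵥ (P *ᵥ (A *ᵥ x + B *ᵥ u)))
            + α * (g ⬝ᵥ (A *ᵥ x + B *ᵥ u)) - lam * (what j ⬝ᵥ what j))
          - (1/4) * ((((2*α) • (Eᵀ *ᵥ (P *ᵥ (A *ᵥ x))) + α • (Eᵀ *ᵥ g) + (2*α) • (Eᵀ *ᵥ (P *ᵥ (B *ᵥ u)))) + (2*lam) • what j) ⬝ᵥ Hww⁻¹ *ᵥ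
              (((2*α) • (Eᵀ *ᵥ (P *ᵥ (A *ᵥ x))) + α • (Eᵀ *ᵥ g) + (2*α) • (Eᵀ *ᵥ (P *ᵥ (B *ᵥ u)))) + (2*lam) • what j))
        = (α * ((A *ᵥ x + B *ᵥ u) ⬝ᵥ (P *ᵥ (A *ᵥ x + B *ᵥ u)))
            + α * (g ⬝ᵥ (A *ᵥ x + B *ᵥ u))
            - (1/4) * (((2*α) • (Eᵀ *ᵥ (P *ᵥ (A *ᵥ x))) + α • (Eᵀ *ᵥ g) + (2*α) • (Eᵀ *ᵥ (P *ᵥ (B *ᵥ u)))) ⬝ᵥ Hww⁻¹ *ᵥ ((2*α) • (Eᵀ *ᵥ (P *ᵥ (A *ᵥ x))) + α • (Eᵀ *ᵥ g) + (2*α) • (Eᵀ *ᵥ (P *ᵥ (B *ᵥ u))))))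
          - lam * (((2*α) • (Eᵀ *ᵥ (P *ᵥ (A *ᵥ x))) + α • (Eᵀ *ᵥ g) + (2*α) • (Eᵀ *ᵥ (P *ᵥ (B *ᵥ u)))) ⬝ᵥ Hww⁻¹ *ᵥ what j)
          - lam * (what j ⬝ᵥ what j)
          - lam^2 * (what j ⬝ᵥ Hww⁻¹ *ᵥ what j) := by
      intro j
      rw [quad_shift Hww⁻¹ hWsymm ((2*α) • (Eᵀ *ᵥ (P *ᵥ (A *ᵥ x))) + α • (Eᵀ *ᵥ g) + (2*α) • (Eᵀ *ᵥ (P *ᵥ (B *ᵥ u)))) (what j) (2*lam)]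
      ring
    rw [Finset.sum_congr rfl fun j _ => hterm j]
    have hsw : ∑ j, (((2*α) • (Eᵀ *ᵥ (P *ᵥ (A *ᵥ x))) + α • (Eᵀ *ᵥ g) + (2*α) • (Eᵀ *ᵥ (P *ᵥ (B *ᵥ u)))) ⬝ᵥ Hww⁻¹ *ᵥ what j)
        = (N:ℝ) * (((2*α) • (Eᵀ *ᵥ (P *ᵥ (A *ᵥ x))) + α • (Eᵀ *ᵥ g) + (2*α) • (Eᵀ *ᵥ (P *ᵥ (B *ᵥ u)))) ⬝ᵥ Hww⁻¹ *ᵥ wbar) := by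
      have h1 : ∑ j, (Hww⁻¹ *ᵥ what j) = Hww⁻¹ *ᵥ ((N:ℝ) • wbar) := by
        rw [← mv_sum]
        congr 1
        rw [hwbar, smul_smul, mul_one_div, div_self hNne, one_smul]
      rw [← dot_sum, h1, mulVec_smul, dotProduct_smul, smul_eq_mul]
    have hsum : ∑ j, ((α * ((A *ᵥ x + B *ᵥ u) ⬝ᵥ (P *ᵥ (A *ᵥ x + B *ᵥ u)))
            + α * (g ⬝ᵥ (A *ᵥ x + B *ᵥ u))
            - (1/4) * (((2*α) • (Eᵀ *ᵥ (P *ᵥ (A *ᵥ x))) + α • (Eᵀ *ᵥ g) + (2*α) • (Eᵀ *ᵥ (P *ᵥ (B *ᵥ u)))) ⬝ᵥ Hww⁻¹ *ᵥ ((2*α) • (Eᵀ *ᵥ (P *ᵥ (A *ᵥ x))) + α • (Eᵀ *ᵥ g) + (2*α) • (Eᵀ *ᵥ (P *ᵥ (B *ᵥ u))))))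
          - lam * (((2*α) • (Eᵀ *ᵥ (P *ᵥ (A *ᵥ x))) + α • (Eᵀ *ᵥ g) + (2*α) • (Eᵀ *ᵥ (P *ᵥ (B *ᵥ u)))) ⬝ᵥ Hww⁻¹ *ᵥ what j)
          - lam * (what j ⬝ᵥ what j)
          - lam^2 * (what j ⬝ᵥ Hww⁻¹ *ᵥ what j))
        = (N:ℝ) * (α * ((A *ᵥ x + B *ᵥ u) ⬝ᵥ (P *ᵥ (A *ᵥ x + B *ᵥ u)))
            + α * (g ⬝ᵥ (A *ᵥ x + B *ᵥ u))
            - (1/4) * (((2*α) • (Eᵀ *ᵥ (P *ᵥ (A *ᵥ x))) + α • (Eᵀ *ᵥ g) + (2*α) • (Eᵀ *ᵥ (P *ᵥ (B *ᵥ u)))) ⬝ᵥ Hww⁻¹ *ᵥ ((2*α) • (Eᵀ *ᵥ (P *ᵥ (A *ᵥ x))) + α • (Eᵀ *ᵥ g) + (2*α) • (Eᵀ *ᵥ (P *ᵥ (B *ᵥ u))))))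
          - lam * ((N:ℝ) * (((2*α) • (Eᵀ *ᵥ (P *ᵥ (A *ᵥ x))) + α • (Eᵀ *ᵥ g) + (2*α) • (Eᵀ *ᵥ (P *ᵥ (B *ᵥ u)))) ⬝ᵥ Hww⁻¹ *ᵥ wbar))
          - lam * (∑ j, what j ⬝ᵥ what j)
          - lam^2 * (∑ j, what j ⬝ᵥ Hww⁻¹ *ᵥ what j) := by
      simp only [Finset.sum_sub_distrib, Finset.sum_const, Finset.card_univ,
        Fintype.card_fin, nsmul_eq_mul, ← Finset.mul_sum, hsw]
      ring
    rw [hsum]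
    have hy1 : (A *ᵥ x + B *ᵥ u) ⬝ᵥ P *ᵥ (A *ᵥ x + B *ᵥ u)
        = (A *ᵥ x) ⬝ᵥ P *ᵥ (A *ᵥ x) + 2 * (u ⬝ᵥ Bᵀ *ᵥ (P *ᵥ (A *ᵥ x)))
          + u ⬝ᵥ Bᵀ *ᵥ (P *ᵥ (B *ᵥ u)) := by
      rw [mulVec_add, dotProduct_add,
        add_dotProduct (A *ᵥ x) (B *ᵥ u) (P *ᵥ (A *ᵥ x)),
        add_dotProduct (A *ᵥ x) (B *ᵥ u) (P *ᵥ (B *ᵥ u)),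
        dot_symm P hP' (A *ᵥ x) (B *ᵥ u), mv_dot B u (P *ᵥ (A *ᵥ x)),
        mv_dot B u (P *ᵥ (B *ᵥ u))]
      ring
    have hy2 : g ⬝ᵥ (A *ᵥ x + B *ᵥ u) = g ⬝ᵥ (A *ᵥ x) + u ⬝ᵥ (Bᵀ *ᵥ g) := by
      rw [dotProduct_add, dotProduct_comm g (B *ᵥ u), mv_dot B u g]
    have hbvW := quad3 Hww⁻¹ hWsymm (2*α) α (2*α) (Eᵀ *ᵥ (P *ᵥ (A *ᵥ x))) (Eᵀ *ᵥ g) (Eᵀ *ᵥ (P *ᵥ (B *ᵥ u)))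
    have hbvwbar := lin3 Hww⁻¹ (2*α) α (2*α) (Eᵀ *ᵥ (P *ᵥ (A *ᵥ x))) (Eᵀ *ᵥ g) (Eᵀ *ᵥ (P *ᵥ (B *ᵥ u))) wbar
    have hSu : u ⬝ᵥ (Huu - Huw * Hww⁻¹ * Huwᵀ) *ᵥ u
        = u ⬝ᵥ R *ᵥ u + α * (u ⬝ᵥ Bᵀ *ᵥ (P *ᵥ (B *ᵥ u)))
          - (α*α) * ((Eᵀ *ᵥ (P *ᵥ (B *ᵥ u))) ⬝ᵥ Hww⁻¹ *ᵥ (Eᵀ *ᵥ (P *ᵥ (B *ᵥ u)))) := by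
      rw [hHuu, hHuwT, hHuw]
      rw [Matrix.smul_mul, Matrix.smul_mul, Matrix.mul_smul, smul_smul]
      rw [sub_mulVec, add_mulVec, smul_mulVec, smul_mulVec]
      rw [dotProduct_sub, dotProduct_add, dotProduct_smul, dotProduct_smul]
      simp only [← mulVec_mulVec]
      rw [trans3 B P hP' E u (Hww⁻¹ *ᵥ (Eᵀ *ᵥ (P *ᵥ (B *ᵥ u)))),
        dotProduct_comm (Hww⁻¹ *ᵥ (Eᵀ *ᵥ (P *ᵥ (B *ᵥ u)))) (Eᵀ *ᵥ (P *ᵥ (B *ᵥ u)))]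
      simp only [smul_eq_mul]
      try ring
    have htu : ((2:ℝ) • ((Hxuᵀ - Huw * Hww⁻¹ * Hxwᵀ) *ᵥ x)
          + (Gu - (Huw * Hww⁻¹) *ᵥ Gw)) ⬝ᵥ u
        = 2*α*(u ⬝ᵥ Bᵀ *ᵥ (P *ᵥ (A *ᵥ x))) - 2*(α*α)*((Eᵀ *ᵥ (P *ᵥ (B *ᵥ u))) ⬝ᵥ Hww⁻¹ *ᵥ (Eᵀ *ᵥ (P *ᵥ (A *ᵥ x))))
          + α*(u ⬝ᵥ (Bᵀ *ᵥ g)) - (α*α)*((Eᵀ *ᵥ (P *ᵥ (B *ᵥ u))) ⬝ᵥ Hww⁻¹ *ᵥ (Eᵀ *ᵥ g))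
          - 2*lam*α*((Eᵀ *ᵥ (P *ᵥ (B *ᵥ u))) ⬝ᵥ Hww⁻¹ *ᵥ wbar) := by
      rw [hHxuT, hHxwT, hHuw, hGu, hGw]
      rw [Matrix.smul_mul, Matrix.smul_mul, Matrix.mul_smul, smul_smul]
      simp only [mulVec_add, mulVec_smul, sub_mulVec, smul_mulVec,
        add_dotProduct, sub_dotProduct, smul_dotProduct, smul_eq_mul,
        ← mulVec_mulVec]
      rw [dotProduct_comm (Bᵀ *ᵥ (P *ᵥ (A *ᵥ x))) u,
        dotProduct_comm (Bᵀ *ᵥ (P *ᵥ (E *ᵥ (Hww⁻¹ *ᵥ (Eᵀ *ᵥ (P *ᵥ (A *ᵥ x))))))) u,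
        dotProduct_comm (Bᵀ *ᵥ g) u,
        dotProduct_comm (Bᵀ *ᵥ (P *ᵥ (E *ᵥ (Hww⁻¹ *ᵥ (Eᵀ *ᵥ g))))) u,
        dotProduct_comm (Bᵀ *ᵥ (P *ᵥ (E *ᵥ (Hww⁻¹ *ᵥ wbar)))) u,
        trans3 B P hP' E u (Hww⁻¹ *ᵥ (Eᵀ *ᵥ (P *ᵥ (A *ᵥ x)))),
        trans3 B P hP' E u (Hww⁻¹ *ᵥ (Eᵀ *ᵥ g)),
        trans3 B P hP' E u (Hww⁻¹ *ᵥ wbar),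
        dotProduct_comm (Hww⁻¹ *ᵥ (Eᵀ *ᵥ (P *ᵥ (A *ᵥ x)))) (Eᵀ *ᵥ (P *ᵥ (B *ᵥ u))),
        dotProduct_comm (Hww⁻¹ *ᵥ (Eᵀ *ᵥ g)) (Eᵀ *ᵥ (P *ᵥ (B *ᵥ u))),
        dotProduct_comm (Hww⁻¹ *ᵥ wbar) (Eᵀ *ᵥ (P *ᵥ (B *ᵥ u)))]
      ring
    rw [hy1, hy2, hbvW, hbvwbar, hSu, htu]
    field_simp
    ring
  have hSust : (Huu - Huw * Hww⁻¹ * Huwᵀ) *ᵥ ustar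
      = (-(1/2 : ℝ)) • ((2:ℝ) • ((Hxuᵀ - Huw * Hww⁻¹ * Hxwᵀ) *ᵥ x)
          + (Gu - (Huw * Hww⁻¹) *ᵥ Gw)) := by
    rw [hustar, hK, hr, mulVec_add, mulVec_mulVec, ← Matrix.mul_assoc, hSinv,
      Matrix.one_mul, mulVec_smul, mulVec_mulVec, hSinv, one_mulVec]
    rw [sub_mulVec, sub_mulVec]
    module
  exact quad_min _ hSsymm hSpd _ _ F hFeq ustar hSust
end

section
/- Let A be n×n, B n×m, E n×d, Q symmetric positive semidefinite, R symmetric positive definite, α ∈ (0,1), λ > 0. Define the Riccati-type map R(P) = H_xx − [H_xu H_xw] [[H_uu, H_uw],[H_uwᵀ, H_ww]]⁻¹ [H_xuᵀ; H_xwᵀ], where H_xx = Q + αAᵀPA, H_xu = αAᵀPB, H_xw = αAᵀPE, H_uu = R + αBᵀPB, H_uw = αBᵀPE, H_ww = αEᵀPE − λI. Let P_0 = 0 and P_{i+1} = R(P_i), and suppose λI − αEᵀP_iE is positive definite for every i. Then the sequence (P_i) is monotone nondecreasing in the Loewner order: 0 = P_0 ⪯ P_1 ⪯ P_2 ⪯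 ⋯, and every P_i is symmetric positive semidefinite. -/
open Matrix

namespace Stmt7Proof

lemma herm_t {t : Type*} [Fintype t] {M : Matrix t t ℝ} (h : M.IsHermitian) : Mᵀ = M := by
  rw [← Matrix.conjTranspose_eq_transpose_of_trivial]; exact h

lemma psd_smul {t : Type*} [Fintype t] {M : Matrix t t ℝ} (hM : M.PosSemidef) {c : ℝ}
    (hc : 0 ≤ c) : (c • M).PosSemidef := by
  refine ⟨?_, fun x => ?_⟩
  · unfold Matrix.IsHermitian
    rw [conjTranspose_smul, hM.1]
    simp
  · exact (hM.smul hc).2 x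

lemma psd_conj {s t : Type*} [Fintype s] [Fintype t] {M : Matrix t t ℝ} (hM : M.PosSemidef)
    (C : Matrix t s ℝ) : (Cᵀ * M * C).PosSemidef := by
  have := hM.conjTranspose_mul_mul_same C
  rwa [conjTranspose_eq_transpose_of_trivial] at this

lemma saddle_isUnit_det {m d : ℕ} {U : Matrix (Fin m) (Fin m) ℝ} {W : Matrix (Fin d) (Fin d) ℝ}
    (X : Matrix (Fin m) (Fin d) ℝ) (hU : U.PosDef) (hW : W.PosDef) :
    IsUnit (fromBlocks U X Xᵀ (-W)).det := by
  letI : Invertible U := hU.isUnit.invertible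
  have hS : (W + Xᵀ * U⁻¹ * X).PosDef := hW.add_posSemidef (psd_conj hU.inv.posSemidef X)
  have hE : -W - Xᵀ * ⅟U * X = -(W + Xᵀ * U⁻¹ * X) := by
    rw [invOf_eq_nonsing_inv]; abel
  letI : Invertible (W + Xᵀ * U⁻¹ * X) := hS.isUnit.invertible
  letI : Invertible (-W - Xᵀ * ⅟U * X) := hE ▸ (invertibleNeg (W + Xᵀ * U⁻¹ * X))
  letI := fromBlocks₁₁Invertible U X Xᵀ (-W)
  exact isUnit_det_of_invertible _

lemma phi_expand {p q : Type*} [Fintype p] [Fintype q]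
    (M : Matrix p p ℝ) (hM : Mᵀ = M) (C : Matrix q p ℝ) (G Δ : Matrix p q ℝ) :
    C * (G + Δ) + (G + Δ)ᵀ * Cᵀ + (G + Δ)ᵀ * M * (G + Δ) =
      (C * G + Gᵀ * Cᵀ + Gᵀ * M * G) +
        ((M * G + Cᵀ)ᵀ * Δ + Δᵀ * (M * G + Cᵀ) + Δᵀ * M * Δ) := by
  simp only [transpose_add, Matrix.add_mul, Matrix.mul_add, transpose_mul, hM,
    transpose_transpose, Matrix.mul_assoc]
  abel

lemma fromRows_add {m₁ m₂ nn : Type*} (A₁ B₁ : Matrix m₁ nn ℝ) (A₂ B₂ : Matrix m₂ nn ℝ) :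
    fromRows (A₁ + B₁) (A₂ + B₂) = fromRows A₁ A₂ + fromRows B₁ B₂ := by
  ext (i | i) j <;> simp

variable {n m d : ℕ}

/-- the quadratic form `Φ(G) = C G + Gᵀ Cᵀ + Gᵀ M G` associated to the saddle matrix -/
noncomputable def phiF (U : Matrix (Fin m) (Fin m) ℝ) (X : Matrix (Fin m) (Fin d) ℝ)
    (W : Matrix (Fin d) (Fin d) ℝ) (Yu : Matrix (Fin n) (Fin m) ℝ)
    (Yw : Matrix (Fin n) (Fin d) ℝ) (G : Matrix (Fin m ⊕ Fin d) (Fin n) ℝ) :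
    Matrix (Fin n) (Fin n) ℝ :=
  fromCols Yu Yw * G + Gᵀ * (fromCols Yu Yw)ᵀ + Gᵀ * fromBlocks U X Xᵀ (-W) * G

/-- the maximizing disturbance gain for a fixed control gain `K` -/
noncomputable def lhF (X : Matrix (Fin m) (Fin d) ℝ) (W : Matrix (Fin d) (Fin d) ℝ)
    (Yw : Matrix (Fin n) (Fin d) ℝ) (K : Matrix (Fin m) (Fin n) ℝ) :
    Matrix (Fin d) (Fin n) ℝ :=
  W⁻¹ * (Ywᵀ + Xᵀ * K)

lemma core (U : Matrix (Fin m) (Fin m) ℝ) (X : Matrix (Fin m) (Fin d) ℝ)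
    (W : Matrix (Fin d) (Fin d) ℝ) (Yu : Matrix (Fin n) (Fin m) ℝ)
    (Yw : Matrix (Fin n) (Fin d) ℝ) (hU : U.PosDef) (hW : W.PosDef)
    (hUt : Uᵀ = U) (hWt : Wᵀ = W) :
    ∃ K₀ : Matrix (Fin m) (Fin n) ℝ,
      (fromCols Yu Yw * (fromBlocks U X Xᵀ (-W))⁻¹ * (fromCols Yu Yw)ᵀ
          = -(phiF U X W Yu Yw (fromRows K₀ (lhF X W Yw K₀)))) ∧
      (∀ K L, (phiF U X W Yu Yw (fromRows K (lhF X W Yw K))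
          - phiF U X W Yu Yw (fromRows K L)).PosSemidef) ∧
      (∀ K, (phiF U X W Yu Yw (fromRows K (lhF X W Yw K))
          - phiF U X W Yu Yw (fromRows K₀ (lhF X W Yw K₀))).PosSemidef) := by
  set M : Matrix (Fin m ⊕ Fin d) (Fin m ⊕ Fin d) ℝ := fromBlocks U X Xᵀ (-W) with hMdef
  set C : Matrix (Fin n) (Fin m ⊕ Fin d) ℝ := fromCols Yu Yw with hCdef
  have hphi : ∀ G, phiF U X W Yu Yw G = C * G + Gᵀ * Cᵀ + Gᵀ * M * G := fun _ => rfl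
  have hMt : Mᵀ = M := by
    rw [hMdef, fromBlocks_transpose, transpose_neg, hWt, hUt, transpose_transpose]
  have hdet : IsUnit M.det := saddle_isUnit_det X hU hW
  have hWdet : IsUnit W.det := (Matrix.isUnit_iff_isUnit_det W).mp hW.isUnit
  set G₀ : Matrix (Fin m ⊕ Fin d) (Fin n) ℝ := -(M⁻¹ * Cᵀ) with hG₀def
  set K₀ := toRows₁ G₀ with hK₀def
  set L₀ := toRows₂ G₀ with hL₀def
  have hG₀ : fromRows K₀ L₀ = G₀ := fromRows_toRows G₀
  have hMG : M * G₀ = -Cᵀ := by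
    rw [hG₀def, Matrix.mul_neg, ← Matrix.mul_assoc, Matrix.mul_nonsing_inv _ hdet,
      Matrix.one_mul]
  have hCt : Cᵀ = fromRows Yuᵀ Ywᵀ := transpose_fromCols Yu Yw
  have hrow2 : Xᵀ * K₀ + -W * L₀ = -Ywᵀ := by
    have h := hMG
    rw [← hG₀, hMdef, fromBlocks_mul_fromRows, hCt, fromRows_neg] at h
    exact (fromRows_inj.eq_iff.mp h).2
  have hL₀eq : W * L₀ = Ywᵀ + Xᵀ * K₀ := by
    have h : Xᵀ * K₀ - W * L₀ = -Ywᵀ := by rw [sub_eq_add_neg, ← Matrix.neg_mul]; exact hrow2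
    rw [sub_eq_iff_eq_add.mp h]; abel
  have hlh : ∀ K, W * lhF X W Yw K = Ywᵀ + Xᵀ * K := by
    intro K
    rw [lhF, ← Matrix.mul_assoc, Matrix.mul_nonsing_inv _ hWdet, Matrix.one_mul]
  have hlhK₀ : lhF X W Yw K₀ = L₀ := by
    rw [lhF, ← hL₀eq, ← Matrix.mul_assoc, Matrix.nonsing_inv_mul _ hWdet, Matrix.one_mul]
  have hMG0 : M * G₀ + Cᵀ = 0 := by rw [hMG]; abel
  refine ⟨K₀, ?_, ?_, ?_⟩
  · rw [hlhK₀, hG₀, hphi]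
    have h1 : G₀ᵀ * M * G₀ = -(G₀ᵀ * Cᵀ) := by
      rw [Matrix.mul_assoc, hMG, Matrix.mul_neg]
    have h2 : C * G₀ = -(C * M⁻¹ * Cᵀ) := by
      rw [hG₀def, Matrix.mul_neg, Matrix.mul_assoc]
    rw [h1, h2]
    abel
  · intro K L
    set Lh := lhF X W Yw K with hLhdef
    set D := L - Lh with hDdef
    have h4 : Lh + D = L := by rw [hDdef]; abel
    have hsplit : fromRows K L = fromRows K Lh + fromRows 0 D := by
      rw [← fromRows_add, add_zero, h4]
    have hz : M * fromRows K Lh + Cᵀ = fromRows (U * K + X * Lh + Yuᵀ) 0 := by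
      rw [hMdef, fromBlocks_mul_fromRows, hCt, ← fromRows_add]
      rw [Matrix.neg_mul, hlh K]
      abel_nf
    have hT : (fromRows 0 D : Matrix (Fin m ⊕ Fin d) (Fin n) ℝ)ᵀ = fromCols 0 Dᵀ := by
      rw [transpose_fromRows, transpose_zero]
    have hcross1 : (fromRows 0 D : Matrix (Fin m ⊕ Fin d) (Fin n) ℝ)ᵀ *
        fromRows (U * K + X * Lh + Yuᵀ) (0 : Matrix (Fin d) (Fin n) ℝ) = 0 := by
      rw [hT, fromCols_mul_fromRows, Matrix.zero_mul, Matrix.mul_zero, add_zero]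
    have hcross2 : (fromRows (U * K + X * Lh + Yuᵀ) (0 : Matrix (Fin d) (Fin n) ℝ))ᵀ *
        fromRows (0 : Matrix (Fin m) (Fin n) ℝ) D = 0 := by
      rw [transpose_fromRows, transpose_zero, fromCols_mul_fromRows, Matrix.mul_zero,
        Matrix.zero_mul, add_zero]
    have hMD : (fromRows (0 : Matrix (Fin m) (Fin n) ℝ) D)ᵀ * M * fromRows (0 : Matrix (Fin m) (Fin n) ℝ) D
        = -(Dᵀ * W * D) := by
      rw [hT, hMdef, fromCols_mul_fromBlocks, fromCols_mul_fromRows]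
      simp [Matrix.mul_zero, Matrix.zero_mul, Matrix.mul_neg, Matrix.neg_mul, Matrix.mul_assoc]
    have hKL : phiF U X W Yu Yw (fromRows K L)
        = phiF U X W Yu Yw (fromRows K Lh) + -(Dᵀ * W * D) := by
      rw [hphi, hphi, hsplit, phi_expand M hMt C (fromRows K Lh) (fromRows 0 D), hz,
        hcross1, hcross2, hMD]
      abel
    have hfin : phiF U X W Yu Yw (fromRows K Lh) - phiF U X W Yu Yw (fromRows K L)
        = Dᵀ * W * D := by rw [hKL]; abel
    rw [hfin]
    exact psd_conj hW.posSemidef D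
  · intro K
    set Lh := lhF X W Yw K with hLhdef
    set DK := K - K₀ with hDKdef
    set DL := Lh - L₀ with hDLdef
    have h5 : K₀ + DK = K := by rw [hDKdef]; abel
    have h6 : L₀ + DL = Lh := by rw [hDLdef]; abel
    have hsplit : fromRows K Lh = G₀ + fromRows DK DL := by
      rw [← hG₀, ← fromRows_add, h5, h6]
    have hrel : W * DL = Xᵀ * DK := by
      rw [hDLdef, hDKdef, Matrix.mul_sub, Matrix.mul_sub, hlh K, hL₀eq]
      abel
    have hMDelta : (fromRows DK DL)ᵀ * M * fromRows DK DL = DKᵀ * U * DK + DLᵀ * W * DL := by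
      rw [transpose_fromRows, hMdef, fromCols_mul_fromBlocks, fromCols_mul_fromRows]
      have h1 : DLᵀ * Xᵀ * DK = DLᵀ * W * DL := by
        rw [Matrix.mul_assoc, ← hrel, ← Matrix.mul_assoc]
      have h2 : DKᵀ * X * DL = DLᵀ * W * DL := by
        have h3 : DKᵀ * X = (Xᵀ * DK)ᵀ := by rw [transpose_mul, transpose_transpose]
        rw [h3, ← hrel, transpose_mul, hWt]
      rw [Matrix.add_mul, Matrix.add_mul, h1, h2, Matrix.mul_neg, Matrix.neg_mul]
      abel
    have hKLh : phiF U X W Yu Yw (fromRows K Lh)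
        = phiF U X W Yu Yw (fromRows K₀ (lhF X W Yw K₀)) + (DKᵀ * U * DK + DLᵀ * W * DL) := by
      rw [hphi, hphi, hlhK₀, hG₀, hsplit, phi_expand M hMt C G₀ (fromRows DK DL), hMG0,
        hMDelta]
      simp only [transpose_zero, Matrix.zero_mul, Matrix.mul_zero]
      abel
    have hfin : phiF U X W Yu Yw (fromRows K Lh)
        - phiF U X W Yu Yw (fromRows K₀ (lhF X W Yw K₀))
        = DKᵀ * U * DK + DLᵀ * W * DL := by rw [hKLh]; abel
    rw [hfin]
    exact (psd_conj hU.posSemidef DK).add (psd_conj hW.posSemidef DL)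

/-- the Riccati-type map, as a function -/
noncomputable def riccMap (A : Matrix (Fin n) (Fin n) ℝ) (B : Matrix (Fin n) (Fin m) ℝ)
    (E : Matrix (Fin n) (Fin d) ℝ) (Q : Matrix (Fin n) (Fin n) ℝ)
    (R : Matrix (Fin m) (Fin m) ℝ) (α lam : ℝ) (P : Matrix (Fin n) (Fin n) ℝ) :
    Matrix (Fin n) (Fin n) ℝ :=
  (Q + α • (Aᵀ * P * A)) -
    fromCols (α • (Aᵀ * P * B)) (α • (Aᵀ * P * E)) *
      (fromBlocks (R + α • (Bᵀ * P * B)) (α • (Bᵀ * P * E))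
        (α • (Bᵀ * P * E))ᵀ
        (α • (Eᵀ * P * E) - lam • (1 : Matrix (Fin d) (Fin d) ℝ)))⁻¹ *
      (fromCols (α • (Aᵀ * P * B)) (α • (Aᵀ * P * E)))ᵀ

/-- closed-loop value `V(P, K, L)` -/
noncomputable def vMap (A : Matrix (Fin n) (Fin n) ℝ) (B : Matrix (Fin n) (Fin m) ℝ)
    (E : Matrix (Fin n) (Fin d) ℝ) (Q : Matrix (Fin n) (Fin n) ℝ)
    (R : Matrix (Fin m) (Fin m) ℝ) (α lam : ℝ) (P : Matrix (Fin n) (Fin n) ℝ)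
    (K : Matrix (Fin m) (Fin n) ℝ) (L : Matrix (Fin d) (Fin n) ℝ) :
    Matrix (Fin n) (Fin n) ℝ :=
  Q + Kᵀ * R * K - lam • (Lᵀ * L) + α • ((A + B * K + E * L)ᵀ * P * (A + B * K + E * L))

lemma v_eq (A : Matrix (Fin n) (Fin n) ℝ) (B : Matrix (Fin n) (Fin m) ℝ)
    (E : Matrix (Fin n) (Fin d) ℝ) (Q : Matrix (Fin n) (Fin n) ℝ)
    (R : Matrix (Fin m) (Fin m) ℝ) (α lam : ℝ) (P : Matrix (Fin n) (Fin n) ℝ)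
    (hPt : Pᵀ = P) (K : Matrix (Fin m) (Fin n) ℝ) (L : Matrix (Fin d) (Fin n) ℝ) :
    vMap A B E Q R α lam P K L =
      (Q + α • (Aᵀ * P * A)) +
        phiF (R + α • (Bᵀ * P * B)) (α • (Bᵀ * P * E))
          (lam • 1 - α • (Eᵀ * P * E)) (α • (Aᵀ * P * B)) (α • (Aᵀ * P * E))
          (fromRows K L) := by
  rw [vMap, phiF]
  simp only [transpose_fromRows, transpose_fromCols, fromCols_mul_fromRows,
    fromCols_mul_fromBlocks, transpose_add, Matrix.transpose_mul, transpose_smul,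
    transpose_transpose, hPt, Matrix.add_mul, Matrix.mul_add, Matrix.smul_mul,
    Matrix.mul_smul, smul_add, smul_sub, Matrix.neg_mul, Matrix.mul_neg, Matrix.sub_mul,
    Matrix.mul_sub, neg_sub, Matrix.mul_one, Matrix.one_mul, sub_eq_add_neg, neg_add,
    neg_neg, Matrix.mul_assoc]
  abel

lemma v_mono (A : Matrix (Fin n) (Fin n) ℝ) (B : Matrix (Fin n) (Fin m) ℝ)
    (E : Matrix (Fin n) (Fin d) ℝ) (Q : Matrix (Fin n) (Fin n) ℝ)
    (R : Matrix (Fin m) (Fin m) ℝ) (α lam : ℝ) (P P' : Matrix (Fin n) (Fin n) ℝ)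
    (K : Matrix (Fin m) (Fin n) ℝ) (L : Matrix (Fin d) (Fin n) ℝ)
    (hα : 0 ≤ α) (hle : (P' - P).PosSemidef) :
    (vMap A B E Q R α lam P' K L - vMap A B E Q R α lam P K L).PosSemidef := by
  have h : vMap A B E Q R α lam P' K L - vMap A B E Q R α lam P K L
      = α • ((A + B * K + E * L)ᵀ * (P' - P) * (A + B * K + E * L)) := by
    rw [vMap, vMap]
    simp only [Matrix.sub_mul, Matrix.mul_sub, smul_sub]
    abel
  rw [h]
  exact psd_smul (psd_conj hle _) hα

lemma key (A : Matrix (Fin n) (Fin n) ℝ) (B : Matrix (Fin n) (Fin m) ℝ)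
    (E : Matrix (Fin n) (Fin d) ℝ) (Q : Matrix (Fin n) (Fin n) ℝ)
    (R : Matrix (Fin m) (Fin m) ℝ) (α lam : ℝ) (P : Matrix (Fin n) (Fin n) ℝ)
    (hα : 0 < α) (hR : R.PosDef) (hQ : Q.PosSemidef) (hP : P.PosSemidef)
    (hw : (lam • (1 : Matrix (Fin d) (Fin d) ℝ) - α • (Eᵀ * P * E)).PosDef) :
    ∃ K₀ : Matrix (Fin m) (Fin n) ℝ,
      (riccMap A B E Q R α lam P = vMap A B E Q R α lam P K₀
        (lhF (α • (Bᵀ * P * E)) (lam • 1 - α • (Eᵀ * P * E)) (α • (Aᵀ * P * E)) K₀)) ∧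
      (∀ K L, (vMap A B E Q R α lam P K
          (lhF (α • (Bᵀ * P * E)) (lam • 1 - α • (Eᵀ * P * E)) (α • (Aᵀ * P * E)) K)
          - vMap A B E Q R α lam P K L).PosSemidef) ∧
      (∀ K, (vMap A B E Q R α lam P K
          (lhF (α • (Bᵀ * P * E)) (lam • 1 - α • (Eᵀ * P * E)) (α • (Aᵀ * P * E)) K)
          - riccMap A B E Q R α lam P).PosSemidef) := by
  have hPt : Pᵀ = P := herm_t hP.1
  have hRt : Rᵀ = R := herm_t hR.1
  have hU : (R + α • (Bᵀ * P * B)).PosDef :=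
    hR.add_posSemidef (psd_smul (psd_conj hP B) hα.le)
  have hUt : (R + α • (Bᵀ * P * B))ᵀ = R + α • (Bᵀ * P * B) := by
    simp [transpose_add, transpose_smul, Matrix.transpose_mul, transpose_transpose, hPt, hRt,
      Matrix.mul_assoc]
  have hWt : (lam • (1 : Matrix (Fin d) (Fin d) ℝ) - α • (Eᵀ * P * E))ᵀ
      = lam • (1 : Matrix (Fin d) (Fin d) ℝ) - α • (Eᵀ * P * E) := by
    simp [transpose_sub, transpose_smul, Matrix.transpose_mul, transpose_transpose, hPt,
      Matrix.transpose_one, Matrix.mul_assoc]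
  obtain ⟨K₀, hc1, hc2, hc3⟩ := core (R + α • (Bᵀ * P * B)) (α • (Bᵀ * P * E))
    (lam • 1 - α • (Eᵀ * P * E)) (α • (Aᵀ * P * B)) (α • (Aᵀ * P * E)) hU hw hUt hWt
  have hblk : α • (Eᵀ * P * E) - lam • (1 : Matrix (Fin d) (Fin d) ℝ)
      = -(lam • (1 : Matrix (Fin d) (Fin d) ℝ) - α • (Eᵀ * P * E)) := (neg_sub _ _).symm
  have hric : riccMap A B E Q R α lam P = (Q + α • (Aᵀ * P * A)) +
      phiF (R + α • (Bᵀ * P * B)) (α • (Bᵀ * P * E)) (lam • 1 - α • (Eᵀ * P * E))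
        (α • (Aᵀ * P * B)) (α • (Aᵀ * P * E))
        (fromRows K₀ (lhF (α • (Bᵀ * P * E)) (lam • 1 - α • (Eᵀ * P * E))
          (α • (Aᵀ * P * E)) K₀)) := by
    rw [riccMap, hblk, hc1, sub_neg_eq_add]
  refine ⟨K₀, ?_, ?_, ?_⟩
  · rw [hric, ← v_eq A B E Q R α lam P hPt]
  · intro K L
    rw [v_eq A B E Q R α lam P hPt K _, v_eq A B E Q R α lam P hPt K L,
      add_sub_add_left_eq_sub]
    exact hc2 K L
  · intro K
    rw [v_eq A B E Q R α lam P hPt K _, hric, add_sub_add_left_eq_sub]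
    exact hc3 K

lemma ricc_psd (A : Matrix (Fin n) (Fin n) ℝ) (B : Matrix (Fin n) (Fin m) ℝ)
    (E : Matrix (Fin n) (Fin d) ℝ) (Q : Matrix (Fin n) (Fin n) ℝ)
    (R : Matrix (Fin m) (Fin m) ℝ) (α lam : ℝ) (P : Matrix (Fin n) (Fin n) ℝ)
    (hα : 0 < α) (hR : R.PosDef) (hQ : Q.PosSemidef) (hP : P.PosSemidef)
    (hw : (lam • (1 : Matrix (Fin d) (Fin d) ℝ) - α • (Eᵀ * P * E)).PosDef) :
    (riccMap A B E Q R α lam P).PosSemidef := by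
  obtain ⟨K₀, h1, h2, h3⟩ := key A B E Q R α lam P hα hR hQ hP hw
  have hPt : Pᵀ = P := herm_t hP.1
  have hv0 : (vMap A B E Q R α lam P K₀ 0).PosSemidef := by
    have hv : vMap A B E Q R α lam P K₀ 0
        = (Q + K₀ᵀ * R * K₀) + α • ((A + B * K₀)ᵀ * P * (A + B * K₀)) := by
      rw [vMap]
      simp [Matrix.mul_zero, transpose_zero, Matrix.zero_mul, add_zero, smul_zero, sub_zero]
    rw [hv]
    exact (hQ.add (psd_conj hR.posSemidef K₀)).add (psd_smul (psd_conj hP _) hα.le)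
  have heq : riccMap A B E Q R α lam P =
      (vMap A B E Q R α lam P K₀
        (lhF (α • (Bᵀ * P * E)) (lam • 1 - α • (Eᵀ * P * E)) (α • (Aᵀ * P * E)) K₀)
        - vMap A B E Q R α lam P K₀ 0) + vMap A B E Q R α lam P K₀ 0 := by
    rw [h1]; abel
  rw [heq]
  exact (h2 K₀ 0).add hv0

lemma ricc_mono (A : Matrix (Fin n) (Fin n) ℝ) (B : Matrix (Fin n) (Fin m) ℝ)
    (E : Matrix (Fin n) (Fin d) ℝ) (Q : Matrix (Fin n) (Fin n) ℝ)
    (R : Matrix (Fin m) (Fin m) ℝ) (α lam : ℝ) (P P' : Matrix (Fin n) (Fin n) ℝ)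
    (hα : 0 < α) (hR : R.PosDef) (hQ : Q.PosSemidef) (hP : P.PosSemidef)
    (hP' : P'.PosSemidef) (hle : (P' - P).PosSemidef)
    (hw : (lam • (1 : Matrix (Fin d) (Fin d) ℝ) - α • (Eᵀ * P * E)).PosDef)
    (hw' : (lam • (1 : Matrix (Fin d) (Fin d) ℝ) - α • (Eᵀ * P' * E)).PosDef) :
    (riccMap A B E Q R α lam P' - riccMap A B E Q R α lam P).PosSemidef := by
  obtain ⟨K₀', h1', h2', h3'⟩ := key A B E Q R α lam P' hα hR hQ hP' hw'
  obtain ⟨K₀, h1, h2, h3⟩ := key A B E Q R α lam P hα hR hQ hP hw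
  set Lt := lhF (α • (Bᵀ * P * E)) (lam • 1 - α • (Eᵀ * P * E)) (α • (Aᵀ * P * E)) K₀'
    with hLt
  have d1 := h2' K₀' Lt
  have d2 : (vMap A B E Q R α lam P' K₀' Lt - vMap A B E Q R α lam P K₀' Lt).PosSemidef :=
    v_mono A B E Q R α lam P P' K₀' Lt hα.le hle
  have d3 := h3 K₀'
  have heq : riccMap A B E Q R α lam P' - riccMap A B E Q R α lam P =
      ((vMap A B E Q R α lam P' K₀'
          (lhF (α • (Bᵀ * P' * E)) (lam • 1 - α • (Eᵀ * P' * E)) (α • (Aᵀ * P' * E)) K₀')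
        - vMap A B E Q R α lam P' K₀' Lt)
      + (vMap A B E Q R α lam P' K₀' Lt - vMap A B E Q R α lam P K₀' Lt))
      + (vMap A B E Q R α lam P K₀' Lt - riccMap A B E Q R α lam P) := by
    rw [h1']; abel
  rw [heq]
  exact ((d1.add d2).add d3)

end Stmt7Proof

open Stmt7Proof in
/-- the Riccati-type value-iteration sequence starting from `P₀ = 0` is
monotone nondecreasing in the Loewner order, and every iterate is symmetric positive
semidefinite. (`M ⪯ N` is expressed as `(N - M).PosSemidef`.) -/
theorem stmt7 {n m d : ℕ}
    (A : Matrix (Fin n) (Fin n) ℝ) (B : Matrix (Fin n) (Fin m) ℝ)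
    (E : Matrix (Fin n) (Fin d) ℝ)
    (Q : Matrix (Fin n) (Fin n) ℝ) (R : Matrix (Fin m) (Fin m) ℝ)
    (α lam : ℝ) (hα : α ∈ Set.Ioo (0 : ℝ) 1) (hlam : 0 < lam)
    (hQ : Q.PosSemidef) (hR : R.PosDef)
    (Ricc : Matrix (Fin n) (Fin n) ℝ → Matrix (Fin n) (Fin n) ℝ)
    (hRicc : ∀ P : Matrix (Fin n) (Fin n) ℝ,
      Ricc P = (Q + α • (Aᵀ * P * A)) -
        fromCols (α • (Aᵀ * P * B)) (α • (Aᵀ * P * E)) *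
          (fromBlocks (R + α • (Bᵀ * P * B)) (α • (Bᵀ * P * E))
            (α • (Bᵀ * P * E))ᵀ
            (α • (Eᵀ * P * E) - lam • (1 : Matrix (Fin d) (Fin d) ℝ)))⁻¹ *
          (fromCols (α • (Aᵀ * P * B)) (α • (Aᵀ * P * E)))ᵀ)
    (Pseq : ℕ → Matrix (Fin n) (Fin n) ℝ)
    (hP0 : Pseq 0 = 0) (hPs : ∀ i, Pseq (i + 1) = Ricc (Pseq i))
    (hpd : ∀ i,
      (lam • (1 : Matrix (Fin d) (Fin d) ℝ) - α • (Eᵀ * Pseq i * E)).PosDef) :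
    (∀ i, (Pseq i).PosSemidef) ∧ ∀ i, (Pseq (i + 1) - Pseq i).PosSemidef := by
  have hRicc' : ∀ P, Ricc P = riccMap A B E Q R α lam P := fun P => by
    rw [hRicc P]; rfl
  have main : ∀ i, (Pseq i).PosSemidef ∧ (Pseq (i + 1) - Pseq i).PosSemidef := by
    intro i
    induction i with
    | zero =>
      constructor
      · rw [hP0]; exact Matrix.PosSemidef.zero
      · have hw0 : (lam • (1 : Matrix (Fin d) (Fin d) ℝ)
            - α • (Eᵀ * (0 : Matrix (Fin n) (Fin n) ℝ) * E)).PosDef := by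
          have := hpd 0; rwa [hP0] at this
        rw [hPs 0, hRicc' (Pseq 0), hP0, sub_zero]
        exact ricc_psd A B E Q R α lam 0 hα.1 hR hQ Matrix.PosSemidef.zero hw0
    | succ i ih =>
      obtain ⟨hPi, hdi⟩ := ih
      have hPi1 : (Pseq (i + 1)).PosSemidef := by
        rw [hPs i, hRicc' (Pseq i)]
        exact ricc_psd A B E Q R α lam (Pseq i) hα.1 hR hQ hPi (hpd i)
      refine ⟨hPi1, ?_⟩
      have e : Pseq (i + 1 + 1) - Pseq (i + 1)
          = riccMap A B E Q R α lam (Pseq (i + 1)) - riccMap A B E Q R α lam (Pseq i) := by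
        conv_lhs => rw [hPs (i + 1)]
        rw [hRicc' (Pseq (i + 1)), hPs i, hRicc' (Pseq i)]
      rw [e]
      exact ricc_mono A B E Q R α lam (Pseq i) (Pseq (i + 1)) hα.1 hR hQ hPi hPi1 hdi
        (hpd i) (hpd (i + 1))
  exact ⟨fun i => (main i).1, fun i => (main i).2⟩
end

section
/- Let A be n×n, B n×m, E n×d, Q symmetric positive semidefinite, R symmetric positive definite, α ∈ (0,1), λ > 0, P a symmetric positive semidefinite n×n matrix with λI − αEᵀPE positive definite, g ∈ ℝⁿ, z ∈ ℝ, and w̄ ∈ ℝ^d. With the blocks H_xx = Q + αAᵀPA, H_xu = αAᵀPB, H_xw = αAᵀPE, H_uu = R + αBᵀPB, H_uw = αBᵀPE, H_ww = αEᵀPE − λI, G_x = αAᵀg, G_u = αBᵀg, G_w = αEᵀg + 2λw̄, for every x ∈ ℝⁿ: min_{u∈ℝ^m} sup_{w∈ℝ^d} { xᵀQx + uᵀRu − λ‖w−w̄‖² + α[(Ax+Bu+Ew)ᵀP(Ax+Bu+Ew) + gᵀ(Ax+Bu+Ew) + z] } = xᵀP⁺x + (g⁺)ᵀx + z_c, where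 P⁺ = H_xx − [H_xu H_xw] [[H_uu, H_uw],[H_uwᵀ, H_ww]]⁻¹ [H_xuᵀ; H_xwᵀ], g⁺ = G_x − [H_xu H_xw] [[H_uu, H_uw],[H_uwᵀ, H_ww]]⁻¹ [G_u; G_w], z_c = αz − λ‖w̄‖² − ¼ tr(H_ww⁻¹ G_w G_wᵀ) − ¼ (G_u − H_uw H_ww⁻¹ G_w)ᵀ (H_uu − H_uw H_ww⁻¹ H_uwᵀ)⁻¹ (G_u − H_uw H_ww⁻¹ G_w), and the unique outer minimizer is u* = Kx + r with K = (H_uu − H_uw H_ww⁻¹ H_uwᵀ)⁻¹(H_uw H_ww⁻¹ H_xwᵀ − H_xuᵀ) and r = −½(H_uu − H_uw H_ww⁻¹ H_uwᵀ)⁻¹(G_u − H_uw H_ww⁻¹ G_w). -/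
open Matrix

section Helpers
variable {k l : Type*} [Fintype k] [Fintype l]

lemma dot_sym (M : Matrix k k ℝ) (hM : Mᵀ = M) (a b : k → ℝ) :
    a ⬝ᵥ (M *ᵥ b) = b ⬝ᵥ (M *ᵥ a) := by
  rw [Matrix.dotProduct_mulVec, ← Matrix.vecMul_transpose, hM, dotProduct_comm]

lemma dotP_t1 (M : Matrix k l ℝ) (a : l → ℝ) (v : k → ℝ) :
    a ⬝ᵥ (Mᵀ *ᵥ v) = (M *ᵥ a) ⬝ᵥ v := by
  rw [Matrix.dotProduct_mulVec, Matrix.vecMul_transpose]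

lemma dotP_t2 (M : Matrix k l ℝ) (a : l → ℝ) (v : k → ℝ) :
    (Mᵀ *ᵥ v) ⬝ᵥ a = v ⬝ᵥ (M *ᵥ a) := by
  rw [Matrix.mulVec_transpose, ← Matrix.dotProduct_mulVec]

lemma posdef_symm {M : Matrix k k ℝ} (h : M.PosDef) : Mᵀ = M := h.1

lemma posdef_dot_pos {M : Matrix k k ℝ} (h : M.PosDef)
    {v : k → ℝ} (hv : v ≠ 0) : 0 < v ⬝ᵥ (M *ᵥ v) := by
  simpa using h.dotProduct_mulVec_pos hv

lemma posdef_dot_nonneg {M : Matrix k k ℝ} (h : M.PosDef)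
    (v : k → ℝ) : 0 ≤ v ⬝ᵥ (M *ᵥ v) := by
  simpa using h.posSemidef.dotProduct_mulVec_nonneg v

noncomputable def invertible_of_posdef_neg [DecidableEq k]
    {N : Matrix k k ℝ} (h : (-N).PosDef) : Invertible N := by
  have h1 : Invertible (-N) := h.isUnit.invertible
  have h2 := invertibleNeg (-N)
  rwa [neg_neg] at h2

lemma neg_symm_of_posdef {N : Matrix k k ℝ} (h : (-N).PosDef) :
    Nᵀ = N := by
  have h1 : (-N)ᵀ = -N := posdef_symm h
  rw [Matrix.transpose_neg] at h1
  exact neg_inj.mp h1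

lemma complete_square [DecidableEq k]
    (M : Matrix k k ℝ) (hM : Mᵀ = M) [Invertible M] (b : k → ℝ) (c : ℝ)
    (w₀ : k → ℝ) (hw₀ : w₀ = (-(1:ℝ)/2) • (M⁻¹ *ᵥ b)) (w : k → ℝ) :
    w ⬝ᵥ (M *ᵥ w) + b ⬝ᵥ w + c
      = (w - w₀) ⬝ᵥ (M *ᵥ (w - w₀)) + (c - (1/4) * (b ⬝ᵥ (M⁻¹ *ᵥ b))) := by
  have hMw₀ : M *ᵥ w₀ = (-(1:ℝ)/2) • b := by
    rw [hw₀, Matrix.mulVec_smul, Matrix.mulVec_mulVec, Matrix.mul_inv_of_invertible,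
      Matrix.one_mulVec]
  have h1 : w₀ ⬝ᵥ (M *ᵥ w) = w ⬝ᵥ (M *ᵥ w₀) := dot_sym M hM _ _
  have h2 : w₀ ⬝ᵥ (M *ᵥ w₀) = (1/4) * (b ⬝ᵥ (M⁻¹ *ᵥ b)) := by
    rw [hMw₀, dotProduct_smul, hw₀]
    have : (M⁻¹ *ᵥ b) ⬝ᵥ b = b ⬝ᵥ (M⁻¹ *ᵥ b) := dotProduct_comm _ _
    simp [smul_dotProduct, this]
    ring
  rw [Matrix.mulVec_sub, dotProduct_sub, sub_dotProduct, sub_dotProduct, h1, h2]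
  rw [show w ⬝ᵥ (M *ᵥ w₀) = (-(1:ℝ)/2) * (b ⬝ᵥ w) by
    rw [hMw₀, dotProduct_smul, smul_eq_mul, dotProduct_comm]]
  ring

lemma quad_sup [DecidableEq k]
    (N : Matrix k k ℝ) (hN : (-N).PosDef) (b : k → ℝ) (c : ℝ) :
    IsGreatest (Set.range fun w => w ⬝ᵥ (N *ᵥ w) + b ⬝ᵥ w + c)
      (c - (1/4) * (b ⬝ᵥ (N⁻¹ *ᵥ b))) := by
  letI := invertible_of_posdef_neg hN
  have hNs : Nᵀ = N := neg_symm_of_posdef hN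
  set w₀ := (-(1:ℝ)/2) • (N⁻¹ *ᵥ b) with hw₀
  have key := complete_square N hNs b c w₀ hw₀
  constructor
  · exact ⟨w₀, by simp only; rw [key w₀]; simp⟩
  · rintro v ⟨w, rfl⟩
    simp only
    rw [key w]
    have h0 : 0 ≤ (w - w₀) ⬝ᵥ ((-N) *ᵥ (w - w₀)) := posdef_dot_nonneg hN _
    rw [Matrix.neg_mulVec, dotProduct_neg] at h0
    linarith

lemma quad_min_s12 [DecidableEq k]
    (S : Matrix k k ℝ) (hS : S.PosDef) (b : k → ℝ) (c : ℝ)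
    (u₀ : k → ℝ) (hu₀ : u₀ = (-(1:ℝ)/2) • (S⁻¹ *ᵥ b)) :
    (∀ u, c - (1/4) * (b ⬝ᵥ (S⁻¹ *ᵥ b)) ≤ u ⬝ᵥ (S *ᵥ u) + b ⬝ᵥ u + c) ∧
    (∀ u, u ≠ u₀ → c - (1/4) * (b ⬝ᵥ (S⁻¹ *ᵥ b)) < u ⬝ᵥ (S *ᵥ u) + b ⬝ᵥ u + c) ∧
    (u₀ ⬝ᵥ (S *ᵥ u₀) + b ⬝ᵥ u₀ + c = c - (1/4) * (b ⬝ᵥ (S⁻¹ *ᵥ b))) := by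
  letI := hS.isUnit.invertible
  have hSs : Sᵀ = S := posdef_symm hS
  have key := complete_square S hSs b c u₀ hu₀
  refine ⟨fun u => ?_, fun u hu => ?_, by rw [key u₀]; simp⟩
  · rw [key u]
    have := posdef_dot_nonneg hS (u - u₀)
    linarith
  · rw [key u]
    have := posdef_dot_pos hS (sub_ne_zero.mpr hu)
    linarith

lemma trace_inv_vecMulVec [DecidableEq k] (M : Matrix k k ℝ) (a b : k → ℝ) :
    Matrix.trace (M * vecMulVec a b) = b ⬝ᵥ (M *ᵥ a) := by
  simp only [Matrix.trace, Matrix.diag, Matrix.mul_apply, Matrix.vecMulVec_apply,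
    dotProduct, Matrix.mulVec, Finset.mul_sum]
  congr 1; ext i; congr 1; ext j; ring

lemma posSemidef_smul {M : Matrix k k ℝ} (h : M.PosSemidef) {c : ℝ} (hc : 0 ≤ c) :
    (c • M).PosSemidef := by
  constructor
  · have h1 := h.1
    unfold Matrix.IsHermitian at *
    rw [Matrix.conjTranspose_smul, h1, star_trivial]
  · exact (h.smul hc).2

end Helpers
/-- one-step Bellman identity for the deterministic zero-sum game with
per-stage cost `xᵀQx + uᵀRu − λ‖w−w̄‖²` and quadratic continuation value
`V(y) = yᵀPy + gᵀy + z`, together with uniqueness of the outer minimizer `u* = Kx + r`. -/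
theorem stmt12 {n m d : ℕ}
    (A : Matrix (Fin n) (Fin n) ℝ) (B : Matrix (Fin n) (Fin m) ℝ)
    (E : Matrix (Fin n) (Fin d) ℝ)
    (Q : Matrix (Fin n) (Fin n) ℝ) (R : Matrix (Fin m) (Fin m) ℝ)
    (α lam : ℝ) (hα : α ∈ Set.Ioo (0 : ℝ) 1) (hlam : 0 < lam)
    (hQ : Q.PosSemidef) (hR : R.PosDef)
    (P : Matrix (Fin n) (Fin n) ℝ) (hP : P.PosSemidef)
    (hpd : (lam • (1 : Matrix (Fin d) (Fin d) ℝ) - α • (Eᵀ * P * E)).PosDef)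
    (g : Fin n → ℝ) (z : ℝ) (wbar : Fin d → ℝ)
    -- the blocks
    (Hxx : Matrix (Fin n) (Fin n) ℝ) (Hxu : Matrix (Fin n) (Fin m) ℝ)
    (Hxw : Matrix (Fin n) (Fin d) ℝ) (Huu : Matrix (Fin m) (Fin m) ℝ)
    (Huw : Matrix (Fin m) (Fin d) ℝ) (Hww : Matrix (Fin d) (Fin d) ℝ)
    (Gx : Fin n → ℝ) (Gu : Fin m → ℝ) (Gw : Fin d → ℝ)
    (hHxx : Hxx = Q + α • (Aᵀ * P * A)) (hHxu : Hxu = α • (Aᵀ * P * B))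
    (hHxw : Hxw = α • (Aᵀ * P * E)) (hHuu : Huu = R + α • (Bᵀ * P * B))
    (hHuw : Huw = α • (Bᵀ * P * E))
    (hHww : Hww = α • (Eᵀ * P * E) - lam • (1 : Matrix (Fin d) (Fin d) ℝ))
    (hGx : Gx = α • (Aᵀ *ᵥ g)) (hGu : Gu = α • (Bᵀ *ᵥ g))
    (hGw : Gw = α • (Eᵀ *ᵥ g) + (2 * lam) • wbar)
    -- updated quadratic parameters
    (Pplus : Matrix (Fin n) (Fin n) ℝ) (gplus : Fin n → ℝ) (zc : ℝ)
    (hPplus : Pplus = Hxx - fromCols Hxu Hxw *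
      (fromBlocks Huu Huw Huwᵀ Hww)⁻¹ * (fromCols Hxu Hxw)ᵀ)
    (hgplus : gplus = Gx - (fromCols Hxu Hxw * (fromBlocks Huu Huw Huwᵀ Hww)⁻¹) *ᵥ
      Sum.elim Gu Gw)
    (hzc : zc = α * z - lam * (wbar ⬝ᵥ wbar)
      - (1 / 4 : ℝ) * Matrix.trace (Hww⁻¹ * vecMulVec Gw Gw)
      - (1 / 4 : ℝ) * ((Gu - (Huw * Hww⁻¹) *ᵥ Gw) ⬝ᵥ
          ((Huu - Huw * Hww⁻¹ * Huwᵀ)⁻¹ *ᵥ (Gu - (Huw * Hww⁻¹) *ᵥ Gw))))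
    -- the state, the payoff, and the claimed minimizer
    (x : Fin n → ℝ) (f : (Fin m → ℝ) → (Fin d → ℝ) → ℝ)
    (hf : f = fun u w => x ⬝ᵥ (Q *ᵥ x) + u ⬝ᵥ (R *ᵥ u)
      - lam * ((w - wbar) ⬝ᵥ (w - wbar))
      + α * ((A *ᵥ x + B *ᵥ u + E *ᵥ w) ⬝ᵥ (P *ᵥ (A *ᵥ x + B *ᵥ u + E *ᵥ w))
          + g ⬝ᵥ (A *ᵥ x + B *ᵥ u + E *ᵥ w) + z))
    (K : Matrix (Fin m) (Fin n) ℝ) (r : Fin m → ℝ)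
    (hK : K = (Huu - Huw * Hww⁻¹ * Huwᵀ)⁻¹ * (Huw * Hww⁻¹ * Hxwᵀ - Hxuᵀ))
    (hr : r = (-(1 : ℝ) / 2) • ((Huu - Huw * Hww⁻¹ * Huwᵀ)⁻¹ *ᵥ
      (Gu - (Huw * Hww⁻¹) *ᵥ Gw)))
    (ustar : Fin m → ℝ) (hustar : ustar = K *ᵥ x + r) :
    (⨅ u : Fin m → ℝ, ⨆ w : Fin d → ℝ, f u w)
        = x ⬝ᵥ (Pplus *ᵥ x) + gplus ⬝ᵥ x + zc ∧
      IsMinOn (fun u => ⨆ w : Fin d → ℝ, f u w) Set.univ ustar ∧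
      ∀ u, u ≠ ustar →
        (⨆ w : Fin d → ℝ, f ustar w) < ⨆ w : Fin d → ℝ, f u w := by
  classical
  have hPs : Pᵀ = P := hP.1
  have hnegHww : (-Hww).PosDef := by rw [hHww, neg_sub]; exact hpd
  letI iHww : Invertible Hww := invertible_of_posdef_neg hnegHww
  have hHwws : Hwwᵀ = Hww := neg_symm_of_posdef hnegHww
  have hWs : (Hww⁻¹)ᵀ = Hww⁻¹ := by rw [Matrix.transpose_nonsing_inv, hHwws]
  -- S and its posdefness
  set S := Huu - Huw * Hww⁻¹ * Huwᵀ with hS_def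
  have hSpd : S.PosDef := by
    have hα0 : (0:ℝ) ≤ α := le_of_lt hα.1
    have hBPB : (α • (Bᵀ * P * B)).PosSemidef :=
      posSemidef_smul (hP.conjTranspose_mul_mul_same B) hα0
    have hHuupd : Huu.PosDef := by
      rw [hHuu]; exact hR.add_posSemidef hBPB
    have hinvneg : (-Hww)⁻¹ = -(Hww⁻¹) := by
      apply Matrix.inv_eq_right_inv
      rw [Matrix.mul_neg, Matrix.neg_mul, neg_neg, Matrix.mul_inv_of_invertible]
    have hpsd : (Huw * (-Hww)⁻¹ * Huwᵀ).PosSemidef :=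
      (hnegHww.inv).posSemidef.mul_mul_conjTranspose_same Huw
    have h2 := hHuupd.add_posSemidef hpsd
    have : S = Huu + Huw * (-Hww)⁻¹ * Huwᵀ := by
      rw [hinvneg, hS_def, Matrix.mul_neg, Matrix.neg_mul, sub_eq_add_neg]
    rwa [this]
  letI iS : Invertible S := hSpd.isUnit.invertible
  have hSs : Sᵀ = S := posdef_symm hSpd
  have hSis : (S⁻¹)ᵀ = S⁻¹ := by rw [Matrix.transpose_nonsing_inv, hSs]
  -- canonical form in w
  set bw : (Fin m → ℝ) → (Fin d → ℝ) :=
    fun u => Gw + (2:ℝ) • (Hxwᵀ *ᵥ x) + (2:ℝ) • (Huwᵀ *ᵥ u) with hbw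
  set cst : (Fin m → ℝ) → ℝ := fun u =>
    x ⬝ᵥ (Hxx *ᵥ x) + u ⬝ᵥ (Huu *ᵥ u) + 2 * ((Hxuᵀ *ᵥ x) ⬝ᵥ u)
      + Gx ⬝ᵥ x + Gu ⬝ᵥ u + α * z - lam * (wbar ⬝ᵥ wbar) with hcst
  have hfe : ∀ u w, f u w = w ⬝ᵥ (Hww *ᵥ w) + bw u ⬝ᵥ w + cst u := by
    intro u w
    rw [hf]
    simp only [hbw, hcst, hHxx, hHxu, hHxw, hHuu, hHuw, hHww, hGx, hGu, hGw]
    simp only [Matrix.add_mulVec, Matrix.sub_mulVec, Matrix.smul_mulVec,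
      Matrix.mulVec_add, Matrix.mulVec_sub, Matrix.mulVec_smul,
      ← Matrix.mulVec_mulVec, Matrix.one_mulVec, Matrix.transpose_smul,
      Matrix.transpose_mul, Matrix.transpose_transpose, hPs,
      dotProduct_add, add_dotProduct, dotProduct_sub, sub_dotProduct,
      dotProduct_smul, smul_dotProduct, smul_eq_mul, dotP_t1, dotP_t2]
    linear_combination lam * dotProduct_comm w wbar
      + α * dot_sym P hPs (A *ᵥ x) (E *ᵥ w)
      - 2 * α * dotProduct_comm (P *ᵥ (A *ᵥ x)) (E *ᵥ w)
      + α * dot_sym P hPs (B *ᵥ u) (E *ᵥ w)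
      - 2 * α * dotProduct_comm (P *ᵥ (B *ᵥ u)) (E *ᵥ w)
      + α * dot_sym P hPs (A *ᵥ x) (B *ᵥ u)
      - 2 * α * dotProduct_comm (P *ᵥ (A *ᵥ x)) (B *ᵥ u)
  have hGval : ∀ u, (⨆ w, f u w) = cst u - (1/4) * (bw u ⬝ᵥ (Hww⁻¹ *ᵥ bw u)) := by
    intro u
    rw [iSup_congr (hfe u)]
    exact ((quad_sup Hww hnegHww (bw u) (cst u)).isLUB).ciSup_eq
  -- canonical form in u
  set β := Gu - (Huw * Hww⁻¹) *ᵥ Gw with hβ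
  set bu := β + (2:ℝ) • (Hxuᵀ *ᵥ x) - (2:ℝ) • ((Huw * Hww⁻¹ * Hxwᵀ) *ᵥ x) with hbu
  set c₀ := x ⬝ᵥ (Hxx *ᵥ x) + Gx ⬝ᵥ x + α * z - lam * (wbar ⬝ᵥ wbar)
    - (1/4) * ((Gw + (2:ℝ) • (Hxwᵀ *ᵥ x)) ⬝ᵥ (Hww⁻¹ *ᵥ (Gw + (2:ℝ) • (Hxwᵀ *ᵥ x)))) with hc₀
  have hGquad : ∀ u, (⨆ w, f u w) = u ⬝ᵥ (S *ᵥ u) + bu ⬝ᵥ u + c₀ := by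
    intro u
    rw [hGval u]
    simp only [hbw, hcst, hbu, hβ, hc₀, hS_def]
    simp only [Matrix.add_mulVec, Matrix.sub_mulVec, Matrix.smul_mulVec,
      Matrix.mulVec_add, Matrix.mulVec_sub, Matrix.mulVec_smul,
      ← Matrix.mulVec_mulVec,
      dotProduct_add, add_dotProduct, dotProduct_sub, sub_dotProduct,
      dotProduct_smul, smul_dotProduct, smul_eq_mul, dotP_t1, dotP_t2]
    have e1 : Gw ⬝ᵥ (Hww⁻¹ *ᵥ (Huwᵀ *ᵥ u)) = u ⬝ᵥ (Huw *ᵥ (Hww⁻¹ *ᵥ Gw)) := by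
      rw [dot_sym Hww⁻¹ hWs Gw (Huwᵀ *ᵥ u), dotP_t2]
    have e2 : (Huw *ᵥ (Hww⁻¹ *ᵥ Gw)) ⬝ᵥ u = u ⬝ᵥ (Huw *ᵥ (Hww⁻¹ *ᵥ Gw)) :=
      dotProduct_comm _ _
    have e3 : x ⬝ᵥ (Hxw *ᵥ (Hww⁻¹ *ᵥ (Huwᵀ *ᵥ u))) = u ⬝ᵥ (Huw *ᵥ (Hww⁻¹ *ᵥ (Hxwᵀ *ᵥ x))) := by
      rw [← dotP_t2 Hxw, dot_sym Hww⁻¹ hWs, dotP_t2]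
    have e4 : (Huw *ᵥ (Hww⁻¹ *ᵥ (Hxwᵀ *ᵥ x))) ⬝ᵥ u = u ⬝ᵥ (Huw *ᵥ (Hww⁻¹ *ᵥ (Hxwᵀ *ᵥ x))) :=
      dotProduct_comm _ _
    linear_combination (-(1/2 : ℝ)) * e1 + e2 - e3 + 2 * e4
  have hustar' : ustar = (-(1:ℝ)/2) • (S⁻¹ *ᵥ bu) := by
    rw [hustar, hK, hr, hbu]
    simp only [Matrix.mulVec_add, Matrix.mulVec_sub, Matrix.mulVec_smul,
      ← Matrix.mulVec_mulVec, Matrix.sub_mulVec, smul_add, smul_sub, smul_smul]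
    module
  obtain ⟨hmin1, hmin2, hmin3⟩ := quad_min_s12 S hSpd bu c₀ ustar hustar'
  have hGustar : (⨆ w, f ustar w) = c₀ - (1/4) * (bu ⬝ᵥ (S⁻¹ *ᵥ bu)) := by
    rw [hGquad ustar]; exact hmin3
  have hval : (⨅ u, ⨆ w, f u w) = c₀ - (1/4) * (bu ⬝ᵥ (S⁻¹ *ᵥ bu)) := by
    have hle : IsLeast (Set.range fun u => ⨆ w, f u w)
        (c₀ - (1/4) * (bu ⬝ᵥ (S⁻¹ *ᵥ bu))) := by
      constructor
      · exact ⟨ustar, hGustar⟩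
      · rintro v ⟨u, rfl⟩
        simp only
        rw [hGquad u]; exact hmin1 u
    exact hle.isGLB.ciInf_eq
  refine ⟨?_, ?_, ?_⟩
  · rw [hval]
    have hinvOfHww : ⅟Hww = Hww⁻¹ := invOf_eq_nonsing_inv Hww
    letI iS' : Invertible (Huu - Huw * ⅟Hww * Huwᵀ) := by
      rw [hinvOfHww]; exact iS
    letI iFB := Matrix.fromBlocks₂₂Invertible Huu Huw Huwᵀ Hww
    have hBinv : (fromBlocks Huu Huw Huwᵀ Hww)⁻¹ =
        fromBlocks S⁻¹ (-(S⁻¹ * Huw * Hww⁻¹)) (-(Hww⁻¹ * Huwᵀ * S⁻¹))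
          (Hww⁻¹ + Hww⁻¹ * Huwᵀ * S⁻¹ * Huw * Hww⁻¹) := by
      rw [← invOf_eq_nonsing_inv, Matrix.invOf_fromBlocks₂₂_eq]
      simp only [invOf_eq_nonsing_inv]
      rfl
    rw [hPplus, hgplus, hzc, hBinv, trace_inv_vecMulVec]
    simp only [transpose_fromCols, fromCols_mul_fromBlocks,
      fromCols_mul_fromRows, fromCols_mulVec_sumElim, hbu, hβ, hc₀]
    simp only [Matrix.add_mulVec, Matrix.sub_mulVec, Matrix.smul_mulVec,
      Matrix.mulVec_add, Matrix.mulVec_sub, Matrix.mulVec_smul,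
      ← Matrix.mulVec_mulVec, Matrix.neg_mulVec, Matrix.mulVec_neg,
      dotProduct_neg, neg_dotProduct,
      dotProduct_add, add_dotProduct, dotProduct_sub, sub_dotProduct,
      dotProduct_smul, smul_dotProduct, smul_eq_mul, dotP_t1, dotP_t2]
    set p := Hxuᵀ *ᵥ x with hp
    set gww := Huw *ᵥ (Hww⁻¹ *ᵥ Gw) with hgww
    set h := Huw *ᵥ (Hww⁻¹ *ᵥ (Hxwᵀ *ᵥ x)) with hh
    have e_gu : ∀ v : Fin m → ℝ, v ⬝ᵥ (S⁻¹ *ᵥ p) = x ⬝ᵥ (Hxu *ᵥ (S⁻¹ *ᵥ v)) := by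
      intro v; rw [hp, dot_sym _ hSis, dotP_t2]
    have hflip : ∀ v : Fin m → ℝ,
        h ⬝ᵥ (S⁻¹ *ᵥ v) = x ⬝ᵥ (Hxw *ᵥ (Hww⁻¹ *ᵥ (Huwᵀ *ᵥ (S⁻¹ *ᵥ v)))) := by
      intro v
      rw [hh, ← dotP_t1 Huw, dotProduct_comm, dot_sym _ hWs, dotP_t2]
    have F1 : Gw ⬝ᵥ (Hww⁻¹ *ᵥ (Hxwᵀ *ᵥ x)) = x ⬝ᵥ (Hxw *ᵥ (Hww⁻¹ *ᵥ Gw)) := by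
      rw [dot_sym _ hWs, dotP_t2]
    have F6 : Gu ⬝ᵥ (S⁻¹ *ᵥ h) = x ⬝ᵥ (Hxw *ᵥ (Hww⁻¹ *ᵥ (Huwᵀ *ᵥ (S⁻¹ *ᵥ Gu)))) :=
      (dot_sym _ hSis Gu h).trans (hflip Gu)
    have F9 : gww ⬝ᵥ (S⁻¹ *ᵥ h) = x ⬝ᵥ (Hxw *ᵥ (Hww⁻¹ *ᵥ (Huwᵀ *ᵥ (S⁻¹ *ᵥ gww)))) :=
      (dot_sym _ hSis gww h).trans (hflip gww)
    linear_combination (-(1/2 : ℝ)) * F1 + dotProduct_comm (Hxw *ᵥ (Hww⁻¹ *ᵥ Gw)) x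
      - (1/2 : ℝ) * e_gu Gu + dotProduct_comm (Hxu *ᵥ (S⁻¹ *ᵥ Gu)) x
      + (1/2 : ℝ) * hflip Gu + (1/2 : ℝ) * F6
      - dotProduct_comm (Hxw *ᵥ (Hww⁻¹ *ᵥ (Huwᵀ *ᵥ (S⁻¹ *ᵥ Gu)))) x
      + (1/2 : ℝ) * e_gu gww - dotProduct_comm (Hxu *ᵥ (S⁻¹ *ᵥ gww)) x
      - (1/2 : ℝ) * hflip gww - (1/2 : ℝ) * F9
      + dotProduct_comm (Hxw *ᵥ (Hww⁻¹ *ᵥ (Huwᵀ *ᵥ (S⁻¹ *ᵥ gww)))) x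
      + hflip p - hflip h
  · intro u _
    show (⨆ w, f ustar w) ≤ ⨆ w, f u w
    rw [hGquad u, hGustar]
    exact hmin1 u
  · intro u hu
    rw [hGustar, hGquad u]
    exact hmin2 u hu
end

section
/- Let A be n×n, B n×m, E n×d, Q symmetric positive semidefinite, R symmetric positive definite, α ∈ (0,1), λ > 0, P a symmetric positive semidefinite n×n matrix with λI − αEᵀPE positive definite, g ∈ ℝⁿ, z ∈ ℝ, and w̄ ∈ ℝ^d. Define f(u,w) = xᵀQx + uᵀRu − λ‖w−w̄‖² + α[(Ax+Bu+Ew)ᵀP(Ax+Bu+Ew) + gᵀ(Ax+Bu+Ew) + z] for a fixed x ∈ ℝⁿ. With the blocks H_xx = Q + αAᵀPA, H_xu = αAᵀPB, H_xw = αAᵀPE, H_uu = R + αBᵀPB, H_uw = αBᵀPE, H_ww = αEᵀPE − λI, G_u = αBᵀg, G_w = αEᵀg + 2λw̄, set u* = Kx + r and w* = Lx + l, where K = (H_uu − H_uw H_ww⁻¹ H_uwᵀ)⁻¹(H_uw H_ww⁻¹ H_xwᵀ − H_xuᵀ), r = −½(H_uu − H_uw H_ww⁻¹ H_uwᵀ)⁻¹(G_u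 − H_uw H_ww⁻¹ G_w), L = (H_ww − H_uwᵀ H_uu⁻¹ H_uw)⁻¹(H_uwᵀ H_uu⁻¹ H_xuᵀ − H_xwᵀ), l = −½(H_ww − H_uwᵀ H_uu⁻¹ H_uw)⁻¹(G_w − H_uwᵀ H_uu⁻¹ G_u). Then (u*, w*) is a saddle point of f: f(u*, w) ≤ f(u*, w*) ≤ f(u, w*) for all u ∈ ℝ^m and w ∈ ℝ^d. -/
open Matrix

set_option maxHeartbeats 1000000

lemma stmt13_dot_tr {k j : ℕ} (B : Matrix (Fin k) (Fin j) ℝ) (u : Fin j → ℝ) (t : Fin k → ℝ) :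
    u ⬝ᵥ (Bᵀ *ᵥ t) = (B *ᵥ u) ⬝ᵥ t := by
  rw [dotProduct_mulVec, vecMul_transpose]

lemma stmt13_dot_sym {k : ℕ} {M : Matrix (Fin k) (Fin k) ℝ} (hM : Mᵀ = M)
    (a b : Fin k → ℝ) : a ⬝ᵥ M *ᵥ b = b ⬝ᵥ M *ᵥ a := by
  conv_lhs => rw [← hM]
  rw [stmt13_dot_tr, dotProduct_comm]

lemma stmt13_expand {k : ℕ} {M : Matrix (Fin k) (Fin k) ℝ} (hM : Mᵀ = M)
    (s t : Fin k → ℝ) :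
    (s + t) ⬝ᵥ M *ᵥ (s + t)
      = s ⬝ᵥ M *ᵥ s + 2 * (s ⬝ᵥ M *ᵥ t) + t ⬝ᵥ M *ᵥ t := by
  rw [mulVec_add, dotProduct_add, add_dotProduct, add_dotProduct,
    stmt13_dot_sym hM t s]
  ring

lemma stmt13_herm {k : ℕ} {M : Matrix (Fin k) (Fin k) ℝ} (hM : M.IsHermitian) : Mᵀ = M := by
  rw [← conjTranspose_eq_transpose_of_trivial]; exact hM

lemma stmt13_quad_diff {k : ℕ} (M : Matrix (Fin k) (Fin k) ℝ) (hM : Mᵀ = M)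
    (a v0 v : Fin k → ℝ) (h0 : (2:ℝ) • (M *ᵥ v0) + a = 0) :
    (v ⬝ᵥ M *ᵥ v + a ⬝ᵥ v) - (v0 ⬝ᵥ M *ᵥ v0 + a ⬝ᵥ v0)
      = (v - v0) ⬝ᵥ M *ᵥ (v - v0) := by
  have ha : a = -((2:ℝ) • (M *ᵥ v0)) := by
    have := h0
    rw [add_eq_zero_iff_eq_neg] at this
    linear_combination (norm := abel) this
  rw [ha]
  rw [mulVec_sub, dotProduct_sub, sub_dotProduct, sub_dotProduct,
    stmt13_dot_sym hM v0 v]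
  simp only [neg_dotProduct, smul_dotProduct, smul_eq_mul,
    dotProduct_comm (M *ᵥ v0) v, dotProduct_comm (M *ᵥ v0) v0]
  ring

lemma stmt13_psd_smul {k : ℕ} {M : Matrix (Fin k) (Fin k) ℝ} (h : M.PosSemidef)
    {c : ℝ} (hc : 0 ≤ c) : (c • M).PosSemidef := by
  constructor
  · show (c • M)ᴴ = c • M
    rw [conjTranspose_smul, star_trivial, h.1]
  · refine ((posSemidef_iff_dotProduct_mulVec (M := c • M)).mpr ⟨?_, fun v => ?_⟩).2
    · show (c • M)ᴴ = c • M
      rw [conjTranspose_smul, star_trivial, h.1]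
    · rw [smul_mulVec, dotProduct_smul, smul_eq_mul]
      exact mul_nonneg hc (h.dotProduct_mulVec_nonneg v)

lemma stmt13_psd_conj {k j : ℕ} {M : Matrix (Fin k) (Fin k) ℝ} (h : M.PosSemidef)
    (C : Matrix (Fin j) (Fin k) ℝ) : (C * M * Cᵀ).PosSemidef := by
  have := h.mul_mul_conjTranspose_same C
  rwa [conjTranspose_eq_transpose_of_trivial] at this

lemma stmt13_psd_conj' {k j : ℕ} {M : Matrix (Fin k) (Fin k) ℝ} (h : M.PosSemidef)
    (C : Matrix (Fin k) (Fin j) ℝ) : (Cᵀ * M * C).PosSemidef := by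
  have := h.conjTranspose_mul_mul_same C
  rwa [conjTranspose_eq_transpose_of_trivial] at this
/-- `(u*, w*) = (Kx + r, Lx + l)` is a saddle point of the one-step payoff
`f(u,w) = xᵀQx + uᵀRu − λ‖w−w̄‖² + α[(Ax+Bu+Ew)ᵀP(Ax+Bu+Ew) + gᵀ(Ax+Bu+Ew) + z]`. -/
theorem stmt13 {n m d : ℕ}
    (A : Matrix (Fin n) (Fin n) ℝ) (B : Matrix (Fin n) (Fin m) ℝ)
    (E : Matrix (Fin n) (Fin d) ℝ)
    (Q : Matrix (Fin n) (Fin n) ℝ) (R : Matrix (Fin m) (Fin m) ℝ)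
    (α lam : ℝ) (hα : α ∈ Set.Ioo (0 : ℝ) 1) (hlam : 0 < lam)
    (hQ : Q.PosSemidef) (hR : R.PosDef)
    (P : Matrix (Fin n) (Fin n) ℝ) (hP : P.PosSemidef)
    (hpd : (lam • (1 : Matrix (Fin d) (Fin d) ℝ) - α • (Eᵀ * P * E)).PosDef)
    (g : Fin n → ℝ) (z : ℝ) (wbar : Fin d → ℝ)
    (x : Fin n → ℝ) (f : (Fin m → ℝ) → (Fin d → ℝ) → ℝ)
    (hf : f = fun u w => x ⬝ᵥ (Q *ᵥ x) + u ⬝ᵥ (R *ᵥ u)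
      - lam * ((w - wbar) ⬝ᵥ (w - wbar))
      + α * ((A *ᵥ x + B *ᵥ u + E *ᵥ w) ⬝ᵥ (P *ᵥ (A *ᵥ x + B *ᵥ u + E *ᵥ w))
          + g ⬝ᵥ (A *ᵥ x + B *ᵥ u + E *ᵥ w) + z))
    -- the blocks
    (Hxx : Matrix (Fin n) (Fin n) ℝ) (Hxu : Matrix (Fin n) (Fin m) ℝ)
    (Hxw : Matrix (Fin n) (Fin d) ℝ) (Huu : Matrix (Fin m) (Fin m) ℝ)
    (Huw : Matrix (Fin m) (Fin d) ℝ) (Hww : Matrix (Fin d) (Fin d) ℝ)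
    (Gu : Fin m → ℝ) (Gw : Fin d → ℝ)
    (hHxx : Hxx = Q + α • (Aᵀ * P * A)) (hHxu : Hxu = α • (Aᵀ * P * B))
    (hHxw : Hxw = α • (Aᵀ * P * E)) (hHuu : Huu = R + α • (Bᵀ * P * B))
    (hHuw : Huw = α • (Bᵀ * P * E))
    (hHww : Hww = α • (Eᵀ * P * E) - lam • (1 : Matrix (Fin d) (Fin d) ℝ))
    (hGu : Gu = α • (Bᵀ *ᵥ g)) (hGw : Gw = α • (Eᵀ *ᵥ g) + (2 * lam) • wbar)
    -- the saddle point
    (K : Matrix (Fin m) (Fin n) ℝ) (r : Fin m → ℝ)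
    (L : Matrix (Fin d) (Fin n) ℝ) (l : Fin d → ℝ)
    (hK : K = (Huu - Huw * Hww⁻¹ * Huwᵀ)⁻¹ * (Huw * Hww⁻¹ * Hxwᵀ - Hxuᵀ))
    (hr : r = (-(1 : ℝ) / 2) • ((Huu - Huw * Hww⁻¹ * Huwᵀ)⁻¹ *ᵥ
      (Gu - (Huw * Hww⁻¹) *ᵥ Gw)))
    (hL : L = (Hww - Huwᵀ * Huu⁻¹ * Huw)⁻¹ * (Huwᵀ * Huu⁻¹ * Hxuᵀ - Hxwᵀ))
    (hl : l = (-(1 : ℝ) / 2) • ((Hww - Huwᵀ * Huu⁻¹ * Huw)⁻¹ *ᵥ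
      (Gw - (Huwᵀ * Huu⁻¹) *ᵥ Gu)))
    (ustar : Fin m → ℝ) (hustar : ustar = K *ᵥ x + r)
    (wstar : Fin d → ℝ) (hwstar : wstar = L *ᵥ x + l) :
    ∀ (u : Fin m → ℝ) (w : Fin d → ℝ),
      f ustar w ≤ f ustar wstar ∧ f ustar wstar ≤ f u wstar := by
  obtain ⟨hα0, -⟩ := hα
  have hPsym : Pᵀ = P := stmt13_herm hP.1
  set N : Matrix (Fin d) (Fin d) ℝ := lam • 1 - α • (Eᵀ * P * E) with hN
  have hNpd : N.PosDef := hpd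
  have hHwwN : Hww = -N := by rw [hHww, hN]; exact (neg_sub _ _).symm
  have hUpd : Huu.PosDef := by
    rw [hHuu]
    exact hR.add_posSemidef (stmt13_psd_smul (stmt13_psd_conj' hP B) hα0.le)
  have hUdet : IsUnit Huu.det := hUpd.det_pos.ne'.isUnit
  have hNdet : IsUnit N.det := hNpd.det_pos.ne'.isUnit
  have hWinv : Hww⁻¹ = -(N⁻¹) := by
    apply inv_eq_right_inv
    rw [hHwwN, neg_mul_neg]
    exact mul_nonsing_inv _ hNdet
  have hWdet : IsUnit Hww.det := by
    rw [hHwwN, det_neg]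
    exact (isUnit_one.neg.pow _).mul hNdet
  set Su : Matrix (Fin m) (Fin m) ℝ := Huu - Huw * Hww⁻¹ * Huwᵀ with hSu
  set Sw : Matrix (Fin d) (Fin d) ℝ := Hww - Huwᵀ * Huu⁻¹ * Huw with hSw
  have hSuN : Su = Huu + Huw * N⁻¹ * Huwᵀ := by
    rw [hSu, hWinv]
    simp [Matrix.mul_neg, Matrix.neg_mul, sub_neg_eq_add]
  have hSupd : Su.PosDef := by
    rw [hSuN]
    exact hUpd.add_posSemidef (stmt13_psd_conj hNpd.inv.posSemidef Huw)
  have hSudet : IsUnit Su.det := hSupd.det_pos.ne'.isUnit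
  set negSw : Matrix (Fin d) (Fin d) ℝ := N + Huwᵀ * Huu⁻¹ * Huw with hnegSw
  have hnegSwpd : negSw.PosDef :=
    hNpd.add_posSemidef (stmt13_psd_conj' hUpd.inv.posSemidef Huw)
  have hSwN : Sw = -negSw := by rw [hSw, hHwwN, hnegSw]; abel
  have hSwinv : Sw⁻¹ = -(negSw⁻¹) := by
    apply inv_eq_right_inv
    rw [hSwN, neg_mul_neg]
    exact mul_nonsing_inv _ hnegSwpd.det_pos.ne'.isUnit
  have hSwdet : IsUnit Sw.det := by
    rw [hSwN, det_neg]
    exact (isUnit_one.neg.pow _).mul hnegSwpd.det_pos.ne'.isUnit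
  have hUsym : Huuᵀ = Huu := stmt13_herm hUpd.1
  have hWsym : Hwwᵀ = Hww := by
    rw [hHwwN, transpose_neg, stmt13_herm hNpd.1]
  -- cancellation facts
  have cU : Huu⁻¹ * Huu = 1 := nonsing_inv_mul _ hUdet
  have cW : Hww * Hww⁻¹ = 1 := mul_nonsing_inv _ hWdet
  have cW' : Hww⁻¹ * Hww = 1 := nonsing_inv_mul _ hWdet
  have cU' : Huu * Huu⁻¹ = 1 := mul_nonsing_inv _ hUdet
  have cSu : Su * Su⁻¹ = 1 := mul_nonsing_inv _ hSudet
  have cSw' : Sw⁻¹ * Sw = 1 := nonsing_inv_mul _ hSwdet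
  have cSu' : Su⁻¹ * Su = 1 := nonsing_inv_mul _ hSudet
  have cSw : Sw * Sw⁻¹ = 1 := mul_nonsing_inv _ hSwdet
  -- key matrix identities
  have key1 : Huwᵀ * Huu⁻¹ * Su = Sw * (Hww⁻¹ * Huwᵀ) := by
    rw [hSu, hSw]
    simp only [Matrix.mul_sub, Matrix.sub_mul, Matrix.mul_assoc, cU,
      Matrix.mul_one, Matrix.mul_nonsing_inv_cancel_left _ _ hWdet]
  have key2 : Huw * Hww⁻¹ * Sw = Su * (Huu⁻¹ * Huw) := by
    rw [hSu, hSw]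
    simp only [Matrix.mul_sub, Matrix.sub_mul, Matrix.mul_assoc, cW',
      Matrix.mul_one, Matrix.mul_nonsing_inv_cancel_left _ _ hUdet]
  have e3 : Hww * (Sw⁻¹ * (Huwᵀ * Huu⁻¹)) = Huwᵀ * Su⁻¹ := by
    have h := congrArg (fun X => Hww * (Sw⁻¹ * (X * Su⁻¹))) key1
    simp only [Matrix.mul_assoc] at h
    rw [cSu, Matrix.mul_one] at h
    rw [h, Matrix.nonsing_inv_mul_cancel_left _ _ hSwdet,
      Matrix.mul_nonsing_inv_cancel_left _ _ hWdet]
  have e2 : Huu * (Su⁻¹ * (Huw * Hww⁻¹)) = Huw * Sw⁻¹ := by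
    have h := congrArg (fun X => Huu * (Su⁻¹ * (X * Sw⁻¹))) key2
    simp only [Matrix.mul_assoc] at h
    rw [cSw, Matrix.mul_one] at h
    rw [h, Matrix.nonsing_inv_mul_cancel_left _ _ hSudet,
      Matrix.mul_nonsing_inv_cancel_left _ _ hUdet]
  have e1 : Huw * (Sw⁻¹ * (Huwᵀ * Huu⁻¹)) = Huu * Su⁻¹ - 1 := by
    have h : (Huu - Huw * Hww⁻¹ * Huwᵀ) * Su⁻¹ = 1 := by rw [hSu] at cSu ⊢; exact cSu
    rw [Matrix.sub_mul] at h
    simp only [Matrix.mul_assoc] at h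
    rw [← e3, Matrix.nonsing_inv_mul_cancel_left _ _ hWdet] at h
    rw [sub_eq_iff_eq_add.mp h, add_sub_cancel_left]
  have e4 : Huwᵀ * (Su⁻¹ * (Huw * Hww⁻¹)) = Hww * Sw⁻¹ - 1 := by
    have h : (Hww - Huwᵀ * Huu⁻¹ * Huw) * Sw⁻¹ = 1 := by rw [hSw] at cSw ⊢; exact cSw
    rw [Matrix.sub_mul] at h
    simp only [Matrix.mul_assoc] at h
    rw [← e2, Matrix.nonsing_inv_mul_cancel_left _ _ hUdet] at h
    rw [sub_eq_iff_eq_add.mp h, add_sub_cancel_left]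
  -- stationarity
  set p : Fin m → ℝ := Hxuᵀ *ᵥ x + (2⁻¹ : ℝ) • Gu with hpdef
  set q : Fin d → ℝ := Hxwᵀ *ᵥ x + (2⁻¹ : ℝ) • Gw with hqdef
  have hust : ustar = Su⁻¹ *ᵥ ((Huw * Hww⁻¹) *ᵥ q - p) := by
    rw [hustar, hK, hr, hpdef, hqdef]
    simp only [Matrix.mul_sub, Matrix.sub_mulVec, Matrix.mulVec_sub, Matrix.mulVec_add,
      Matrix.mulVec_smul, Matrix.mulVec_mulVec, smul_sub, smul_add]
    module
  have hwst : wstar = Sw⁻¹ *ᵥ ((Huwᵀ * Huu⁻¹) *ᵥ p - q) := by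
    rw [hwstar, hL, hl, hpdef, hqdef]
    simp only [Matrix.mul_sub, Matrix.sub_mulVec, Matrix.mulVec_sub, Matrix.mulVec_add,
      Matrix.mulVec_smul, Matrix.mulVec_mulVec, smul_sub, smul_add]
    module
  have st1 : Huu *ᵥ ustar + Huw *ᵥ wstar + p = 0 := by
    rw [hust, hwst]
    simp only [Matrix.mulVec_sub, Matrix.mulVec_mulVec]
    rw [e2, e1]
    simp only [Matrix.sub_mulVec, Matrix.one_mulVec]
    abel
  have st2 : Huwᵀ *ᵥ ustar + Hww *ᵥ wstar + q = 0 := by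
    rw [hust, hwst]
    simp only [Matrix.mulVec_sub, Matrix.mulVec_mulVec]
    rw [e4, e3]
    simp only [Matrix.sub_mulVec, Matrix.one_mulVec]
    abel
  -- quadratic expansions
  set s1 : Fin n → ℝ := A *ᵥ x + E *ᵥ wstar with hs1
  set au : Fin m → ℝ := (2 : ℝ) • (Huw *ᵥ wstar + Hxuᵀ *ᵥ x) + Gu with hau
  have hxuT : Hxuᵀ = α • (Bᵀ * (P * A)) := by
    rw [hHxu, transpose_smul, Matrix.transpose_mul, Matrix.transpose_mul,
      transpose_transpose, hPsym]
  have hxwT : Hxwᵀ = α • (Eᵀ * (P * A)) := by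
    rw [hHxw, transpose_smul, Matrix.transpose_mul, Matrix.transpose_mul,
      transpose_transpose, hPsym]
  have huwT : Huwᵀ = α • (Eᵀ * (P * B)) := by
    rw [hHuw, transpose_smul, Matrix.transpose_mul, Matrix.transpose_mul,
      transpose_transpose, hPsym]
  have hdotB : ∀ (t : Fin n → ℝ) (u' : Fin m → ℝ),
      (Bᵀ *ᵥ (P *ᵥ t)) ⬝ᵥ u' = t ⬝ᵥ P *ᵥ (B *ᵥ u') := by
    intro t u'
    rw [dotProduct_comm, stmt13_dot_tr]
    exact (stmt13_dot_sym hPsym _ _).symm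
  have hdotgB : ∀ u' : Fin m → ℝ, (Bᵀ *ᵥ g) ⬝ᵥ u' = g ⬝ᵥ (B *ᵥ u') := by
    intro u'
    rw [dotProduct_comm, stmt13_dot_tr, dotProduct_comm]
  have hdotE : ∀ (t : Fin n → ℝ) (w' : Fin d → ℝ),
      (Eᵀ *ᵥ (P *ᵥ t)) ⬝ᵥ w' = t ⬝ᵥ P *ᵥ (E *ᵥ w') := by
    intro t w'
    rw [dotProduct_comm, stmt13_dot_tr]
    exact (stmt13_dot_sym hPsym _ _).symm
  have hdotgE : ∀ w' : Fin d → ℝ, (Eᵀ *ᵥ g) ⬝ᵥ w' = g ⬝ᵥ (E *ᵥ w') := by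
    intro w'
    rw [dotProduct_comm, stmt13_dot_tr, dotProduct_comm]
  have hfu : ∀ u, f u wstar =
      (x ⬝ᵥ Q *ᵥ x - lam * ((wstar - wbar) ⬝ᵥ (wstar - wbar))
        + α * (s1 ⬝ᵥ P *ᵥ s1 + g ⬝ᵥ s1 + z)) + (u ⬝ᵥ Huu *ᵥ u + au ⬝ᵥ u) := by
    intro u
    have hsum : A *ᵥ x + B *ᵥ u + E *ᵥ wstar = s1 + B *ᵥ u := by rw [hs1]; abel
    have h2 : u ⬝ᵥ Huu *ᵥ u = u ⬝ᵥ R *ᵥ u + α * ((B *ᵥ u) ⬝ᵥ P *ᵥ (B *ᵥ u)) := by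
      rw [hHuu, Matrix.add_mulVec, dotProduct_add, smul_mulVec, dotProduct_smul,
        smul_eq_mul, ← Matrix.mulVec_mulVec, ← Matrix.mulVec_mulVec, stmt13_dot_tr]
    have h3 : au ⬝ᵥ u = 2 * (α * (s1 ⬝ᵥ P *ᵥ (B *ᵥ u))) + α * (g ⬝ᵥ (B *ᵥ u)) := by
      have hc : Huw *ᵥ wstar + Hxuᵀ *ᵥ x = α • (Bᵀ *ᵥ (P *ᵥ s1)) := by
        rw [hHuw, hxuT, hs1]
        simp only [smul_mulVec, ← Matrix.mulVec_mulVec, ← smul_add,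
          ← Matrix.mulVec_add]
        rw [add_comm (A *ᵥ x)]
      rw [hau, hc, hGu]
      simp only [add_dotProduct, smul_dotProduct, smul_eq_mul]
      rw [hdotB, hdotgB]
    rw [hf]
    simp only
    rw [hsum, stmt13_expand hPsym s1 (B *ᵥ u), dotProduct_add, h2, h3]
    ring
  set s2 : Fin n → ℝ := A *ᵥ x + B *ᵥ ustar with hs2
  set aw : Fin d → ℝ := (2 : ℝ) • (Huwᵀ *ᵥ ustar + Hxwᵀ *ᵥ x) + Gw with haw
  have hfw : ∀ w, f ustar w =
      (x ⬝ᵥ Q *ᵥ x + ustar ⬝ᵥ R *ᵥ ustar - lam * (wbar ⬝ᵥ wbar)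
        + α * (s2 ⬝ᵥ P *ᵥ s2 + g ⬝ᵥ s2 + z)) + (w ⬝ᵥ Hww *ᵥ w + aw ⬝ᵥ w) := by
    intro w
    have hsum : A *ᵥ x + B *ᵥ ustar + E *ᵥ w = s2 + E *ᵥ w := by rw [hs2]
    have h2 : w ⬝ᵥ Hww *ᵥ w = α * ((E *ᵥ w) ⬝ᵥ P *ᵥ (E *ᵥ w)) - lam * (w ⬝ᵥ w) := by
      rw [hHww, Matrix.sub_mulVec, dotProduct_sub, smul_mulVec, smul_mulVec,
        dotProduct_smul, dotProduct_smul, smul_eq_mul, smul_eq_mul, Matrix.one_mulVec,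
        ← Matrix.mulVec_mulVec, ← Matrix.mulVec_mulVec, stmt13_dot_tr]
    have h3 : aw ⬝ᵥ w = 2 * (α * (s2 ⬝ᵥ P *ᵥ (E *ᵥ w))) + α * (g ⬝ᵥ (E *ᵥ w))
        + 2 * lam * (wbar ⬝ᵥ w) := by
      have hc : Huwᵀ *ᵥ ustar + Hxwᵀ *ᵥ x = α • (Eᵀ *ᵥ (P *ᵥ s2)) := by
        rw [huwT, hxwT, hs2]
        simp only [smul_mulVec, ← Matrix.mulVec_mulVec, ← smul_add,
          ← Matrix.mulVec_add]
        rw [add_comm (B *ᵥ ustar)]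
      rw [haw, hc, hGw]
      simp only [add_dotProduct, smul_dotProduct, smul_eq_mul]
      rw [hdotE, hdotgE]
      ring
    have hnorm : (w - wbar) ⬝ᵥ (w - wbar)
        = w ⬝ᵥ w - 2 * (wbar ⬝ᵥ w) + wbar ⬝ᵥ wbar := by
      simp only [dotProduct_sub, sub_dotProduct, dotProduct_comm w wbar]
      ring
    rw [hf]
    simp only
    rw [hsum, stmt13_expand hPsym s2 (E *ᵥ w), dotProduct_add, h2, h3, hnorm]
    ring
  -- assemble
  intro u w
  have h0u : (2 : ℝ) • (Huu *ᵥ ustar) + au = 0 := by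
    have h : (2 : ℝ) • (Huu *ᵥ ustar) + au
        = (2 : ℝ) • (Huu *ᵥ ustar + Huw *ᵥ wstar + p) := by
      rw [hau, hpdef]
      module
    rw [h, st1, smul_zero]
  have h0w : (2 : ℝ) • (Hww *ᵥ wstar) + aw = 0 := by
    have h : (2 : ℝ) • (Hww *ᵥ wstar) + aw
        = (2 : ℝ) • (Huwᵀ *ᵥ ustar + Hww *ᵥ wstar + q) := by
      rw [haw, hqdef]
      module
    rw [h, st2, smul_zero]
  constructor
  · have hdiff := stmt13_quad_diff Hww hWsym aw wstar w h0w
    have hneg : (w - wstar) ⬝ᵥ Hww *ᵥ (w - wstar) ≤ 0 := by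
      rw [hHwwN, Matrix.neg_mulVec, dotProduct_neg]
      have h := hNpd.posSemidef.dotProduct_mulVec_nonneg (w - wstar)
      rw [star_trivial] at h
      linarith
    have ha := hfw w
    have hb := hfw wstar
    linarith
  · have hdiff := stmt13_quad_diff Huu hUsym au ustar u h0u
    have hpos : (0:ℝ) ≤ (u - ustar) ⬝ᵥ Huu *ᵥ (u - ustar) := by
      have h := hUpd.posSemidef.dotProduct_mulVec_nonneg (u - ustar)
      rwa [star_trivial] at h
    have ha := hfu u
    have hb := hfu ustar
    linarith
end

section
/- Let A be n×n, B n×m, E n×d, Q symmetric n×n, R symmetric m×m, λ > 0, α ∈ (0,1), w̄ ∈ ℝ^d; let K be m×n, r ∈ ℝ^m, L be d×n, l ∈ ℝ^d, H a symmetric (n+m+d)×(n+m+d) matrix, G ∈ ℝ^{n+m+d}, and s ∈ ℝ. Define e(x) = [x; Kx+r; Lx+l] ∈ ℝ^{n+m+d}, W = blockdiag(Q, R, −λI_d), S = [A B E] (n×(n+m+d)), M = [I; K; L]·S ((n+m+d)×(n+m+d)), b = [0; r; l] and c = [0; 0; 2λw̄] in ℝ^{n+m+d}, and d(x) = e(x)ᵀWe(x)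 + cᵀe(x) − λ‖w̄‖² + α[ e(Se(x))ᵀ H e(Se(x)) + Gᵀ e(Se(x)) + s ]. Then for all x ∈ ℝⁿ: (i) e(Se(x)) = M e(x) + b; and (ii) d(x) = e(x)ᵀ H⁺ e(x) + (G⁺)ᵀ e(x) + s⁺, where H⁺ = W + α MᵀHM, (G⁺)ᵀ = α(Gᵀ + 2bᵀH)M + cᵀ, and s⁺ = α(s + Gᵀb + bᵀHb) − λ‖w̄‖². -/
open Matrix

lemma quad_expand {n : Type*} [Fintype n] [DecidableEq n]
    (H : Matrix n n ℝ) (hH : H.IsSymm) (u b : n → ℝ) :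
    (u + b) ⬝ᵥ (H *ᵥ (u + b)) = u ⬝ᵥ (H *ᵥ u) + 2 * (b ⬝ᵥ (H *ᵥ u)) + b ⬝ᵥ (H *ᵥ b) := by
  have h : u ⬝ᵥ (H *ᵥ b) = b ⬝ᵥ (H *ᵥ u) := by
    rw [dotProduct_mulVec]
    nth_rewrite 1 [← hH]
    rw [vecMul_transpose, dotProduct_comm]
  simp only [mulVec_add, dotProduct_add, add_dotProduct, h]
  ring

/-- the algebraic core of the DR Q-learning update: with the stacked
vector `e(x) = [x; Kx+r; Lx+l]`, one has `e(Se(x)) = Me(x) + b`, and the Bellman target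
`d(x)` is exactly quadratic in `e(x)` with updated parameters `(H⁺, G⁺, s⁺)`. -/
theorem stmt14 {n m d : ℕ}
    (A : Matrix (Fin n) (Fin n) ℝ) (B : Matrix (Fin n) (Fin m) ℝ)
    (E : Matrix (Fin n) (Fin d) ℝ)
    (Q : Matrix (Fin n) (Fin n) ℝ) (R : Matrix (Fin m) (Fin m) ℝ)
    (hQ : Q.IsSymm) (hR : R.IsSymm)
    (lam α : ℝ) (hlam : 0 < lam) (hα : α ∈ Set.Ioo (0 : ℝ) 1)
    (wbar : Fin d → ℝ)
    (K : Matrix (Fin m) (Fin n) ℝ) (r : Fin m → ℝ)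
    (L : Matrix (Fin d) (Fin n) ℝ) (l : Fin d → ℝ)
    (H : Matrix (Fin n ⊕ (Fin m ⊕ Fin d)) (Fin n ⊕ (Fin m ⊕ Fin d)) ℝ)
    (hH : H.IsSymm)
    (G : Fin n ⊕ (Fin m ⊕ Fin d) → ℝ) (s : ℝ)
    -- the stacked data
    (e : (Fin n → ℝ) → Fin n ⊕ (Fin m ⊕ Fin d) → ℝ)
    (he : e = fun x => Sum.elim x (Sum.elim (K *ᵥ x + r) (L *ᵥ x + l)))
    (W : Matrix (Fin n ⊕ (Fin m ⊕ Fin d)) (Fin n ⊕ (Fin m ⊕ Fin d)) ℝ)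
    (hW : W = fromBlocks Q 0 0
      (fromBlocks R 0 0 ((-lam) • (1 : Matrix (Fin d) (Fin d) ℝ))))
    (S : Matrix (Fin n) (Fin n ⊕ (Fin m ⊕ Fin d)) ℝ)
    (hS : S = fromCols A (fromCols B E))
    (M : Matrix (Fin n ⊕ (Fin m ⊕ Fin d)) (Fin n ⊕ (Fin m ⊕ Fin d)) ℝ)
    (hM : M = fromRows (1 : Matrix (Fin n) (Fin n) ℝ) (fromRows K L) * S)
    (b : Fin n ⊕ (Fin m ⊕ Fin d) → ℝ) (hb : b = Sum.elim (0 : Fin n → ℝ) (Sum.elim r l))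
    (c : Fin n ⊕ (Fin m ⊕ Fin d) → ℝ)
    (hc : c = Sum.elim (0 : Fin n → ℝ) (Sum.elim (0 : Fin m → ℝ) ((2 * lam) • wbar)))
    (dfun : (Fin n → ℝ) → ℝ)
    (hdfun : dfun = fun x =>
      e x ⬝ᵥ (W *ᵥ e x) + c ⬝ᵥ e x - lam * (wbar ⬝ᵥ wbar)
        + α * (e (S *ᵥ e x) ⬝ᵥ (H *ᵥ e (S *ᵥ e x)) + G ⬝ᵥ e (S *ᵥ e x) + s))
    -- the updated parameters
    (Hplus : Matrix (Fin n ⊕ (Fin m ⊕ Fin d)) (Fin n ⊕ (Fin m ⊕ Fin d)) ℝ)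
    (hHplus : Hplus = W + α • (Mᵀ * H * M))
    (Gplus : Fin n ⊕ (Fin m ⊕ Fin d) → ℝ)
    (hGplus : Gplus = α • ((G + (2 : ℝ) • (b ᵥ* H)) ᵥ* M) + c)
    (splus : ℝ)
    (hsplus : splus = α * (s + G ⬝ᵥ b + b ⬝ᵥ (H *ᵥ b)) - lam * (wbar ⬝ᵥ wbar)) :
    (∀ x : Fin n → ℝ, e (S *ᵥ e x) = M *ᵥ e x + b) ∧
      ∀ x : Fin n → ℝ,
        dfun x = e x ⬝ᵥ (Hplus *ᵥ e x) + Gplus ⬝ᵥ e x + splus := by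
  have key : ∀ x : Fin n → ℝ, e (S *ᵥ e x) = M *ᵥ e x + b := by
    intro x
    rw [hM, ← mulVec_mulVec, hb]
    set y := S *ᵥ e x with hy
    simp only [he]
    rw [fromRows_mulVec, fromRows_mulVec, one_mulVec]
    ext i
    cases i with
    | inl i => simp
    | inr i => cases i <;> simp
  refine ⟨key, fun x => ?_⟩
  rw [hdfun]
  simp only
  rw [key x]
  set v := e x with hv
  have hq := quad_expand H hH (M *ᵥ v) b
  have h1 : (M *ᵥ v) ⬝ᵥ (H *ᵥ (M *ᵥ v)) = v ⬝ᵥ ((Mᵀ * H * M) *ᵥ v) := by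
    rw [← mulVec_mulVec, ← mulVec_mulVec]
    conv_rhs => rw [dotProduct_mulVec, vecMul_transpose]
  have h4 : (((2 : ℝ) • (b ᵥ* H)) ᵥ* M) ⬝ᵥ v = 2 * (((b ᵥ* H) ᵥ* M) ⬝ᵥ v) := by
    rw [← mulVec_transpose, ← mulVec_transpose, mulVec_smul, smul_dotProduct, smul_eq_mul,
      ← mulVec_transpose]
  have h2 : b ⬝ᵥ (H *ᵥ (M *ᵥ v)) = ((b ᵥ* H) ᵥ* M) ⬝ᵥ v := by
    rw [dotProduct_mulVec, dotProduct_mulVec]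
  have h3 : G ⬝ᵥ (M *ᵥ v) = (G ᵥ* M) ⬝ᵥ v := by rw [dotProduct_mulVec]
  rw [hq, h1, h2, hHplus, hGplus, hsplus]
  simp only [add_mulVec, dotProduct_add, smul_mulVec, dotProduct_smul,
    add_dotProduct, smul_dotProduct, add_vecMul, smul_eq_mul,
    dotProduct_add, h3, h4]
  ring
end

section
/- Let P be a symmetric positive semidefinite n×n real matrix, and with matrices A (n×n), B (n×m), E (n×d), Q symmetric positive semidefinite, R symmetric positive definite, α ∈ (0,1), λ > 0 such that λI − αEᵀPE is positive definite, form the blocks H_xx = Q + αAᵀPA, H_xu = αAᵀPB, H_xw = αAᵀPE, H_uu = R + αBᵀPB, H_uw = αBᵀPE, H_ww = αEᵀPE − λI, and the gains K = (H_uu − H_uw H_ww⁻¹ H_uwᵀ)⁻¹(H_uw H_ww⁻¹ H_xwᵀ − H_xuᵀ) and L = (H_ww − H_uwᵀ H_uu⁻¹ H_uw)⁻¹(H_uwᵀ H_uu⁻¹ H_xuᵀ − H_xwᵀ). Let H denote the symmetric block matrix [[H_xx, H_xu, H_xw],[H_xuᵀ, H_uu, H_uw],[H_xwᵀ, H_uwᵀ,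 H_ww]] and T = [I; K; L]. Then Tᵀ H T = H_xx − [H_xu H_xw] [[H_uu, H_uw],[H_uwᵀ, H_ww]]⁻¹ [H_xuᵀ; H_xwᵀ]; that is, plugging the optimal feedback gains into the quadratic form recovers exactly the Riccati-type update of P. -/
open Matrix

private lemma posSemidef_smul' {k : ℕ} {α : ℝ} (hα : 0 ≤ α) {M : Matrix (Fin k) (Fin k) ℝ}
    (hM : M.PosSemidef) : (α • M).PosSemidef := by
  refine ⟨?_, fun x => ?_⟩
  · show (α • M)ᴴ = α • M
    rw [Matrix.conjTranspose_smul, star_trivial, hM.1.eq]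
  · exact (hM.smul hα).2 x

/-- `a * ⅟s1 * b * ⅟c = b * ⅟s2` where `s1`, `s2` are the two Schur complements. -/
private lemma claimA {p q : ℕ} (a s1 : Matrix (Fin p) (Fin p) ℝ)
    (b : Matrix (Fin p) (Fin q) ℝ) (e : Matrix (Fin q) (Fin p) ℝ)
    (c s2 : Matrix (Fin q) (Fin q) ℝ)
    [Invertible a] [Invertible c] [Invertible s1] [Invertible s2]
    (hs1 : s1 = a - b * ⅟c * e) (hs2 : s2 = c - e * ⅟a * b) :
    a * ⅟s1 * b * ⅟c = b * ⅟s2 := by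
  have h1 : s1 * (⅟a * b) = b * ⅟c * s2 := by
    rw [hs1, hs2]
    simp only [Matrix.sub_mul, Matrix.mul_sub, Matrix.mul_assoc, Matrix.mul_invOf_cancel_left,
      Matrix.invOf_mul_cancel_left, invOf_mul_self, mul_invOf_self, Matrix.mul_one, Matrix.one_mul]
  have h3 : b * ⅟c = s1 * (⅟a * b) * ⅟s2 := by
    calc b * ⅟c = b * ⅟c * s2 * ⅟s2 := by
          rw [Matrix.mul_assoc (b * ⅟c), mul_invOf_self, Matrix.mul_one]
      _ = s1 * (⅟a * b) * ⅟s2 := by rw [← h1]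
  calc a * ⅟s1 * b * ⅟c = a * ⅟s1 * (b * ⅟c) := by rw [Matrix.mul_assoc]
    _ = a * ⅟s1 * (s1 * (⅟a * b) * ⅟s2) := by rw [h3]
    _ = b * ⅟s2 := by
        simp only [Matrix.mul_assoc, Matrix.invOf_mul_cancel_left, Matrix.mul_invOf_cancel_left, invOf_mul_cancel_left, mul_invOf_cancel_left]

private lemma keyIdentity {p q r : ℕ} (a s1 : Matrix (Fin p) (Fin p) ℝ)
    (b : Matrix (Fin p) (Fin q) ℝ) (e : Matrix (Fin q) (Fin p) ℝ)
    (c s2 : Matrix (Fin q) (Fin q) ℝ)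
    [Invertible a] [Invertible c] [Invertible s1] [Invertible s2]
    (hs1 : s1 = a - b * ⅟c * e) (hs2 : s2 = c - e * ⅟a * b)
    (X : Matrix (Fin p) (Fin r) ℝ) (Y : Matrix (Fin q) (Fin r) ℝ) :
    a * (⅟s1 * (b * ⅟c * Y - X)) + b * (⅟s2 * (e * ⅟a * X - Y)) = -X := by
  have hA : a * ⅟s1 * b * ⅟c = b * ⅟s2 := claimA a s1 b e c s2 hs1 hs2
  have hA' : c * ⅟s2 * e * ⅟a = e * ⅟s1 := claimA c s2 e b a s1 hs2 hs1
  have hB : a * ⅟s1 = 1 + b * ⅟s2 * e * ⅟a := by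
    have ha' : a = s1 + b * ⅟c * e := by rw [hs1, sub_add_cancel]
    have h4 : b * ⅟c * e * ⅟s1 = b * ⅟s2 * e * ⅟a := by
      calc b * ⅟c * e * ⅟s1 = b * ⅟c * (e * ⅟s1) := by rw [Matrix.mul_assoc]
        _ = b * ⅟c * (c * ⅟s2 * e * ⅟a) := by rw [hA']
        _ = b * ⅟s2 * e * ⅟a := by
            simp only [Matrix.mul_assoc, Matrix.invOf_mul_cancel_left, invOf_mul_cancel_left]
    calc a * ⅟s1 = (s1 + b * ⅟c * e) * ⅟s1 := by rw [← ha']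
      _ = 1 + b * ⅟c * e * ⅟s1 := by rw [Matrix.add_mul, mul_invOf_self]
      _ = 1 + b * ⅟s2 * e * ⅟a := by rw [h4]
  have expand : a * (⅟s1 * (b * ⅟c * Y - X)) + b * (⅟s2 * (e * ⅟a * X - Y)) =
      a * ⅟s1 * b * ⅟c * Y - a * ⅟s1 * X + (b * ⅟s2 * e * ⅟a * X - b * ⅟s2 * Y) := by
    simp only [Matrix.mul_sub, ← Matrix.mul_assoc]
  rw [expand, hA, hB, Matrix.add_mul, Matrix.one_mul]
  abel

/-- plugging the optimal feedback gains `K`, `L` into the quadratic form of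
the Q-function matrix `H` recovers the Riccati-type update:
`TᵀHT = H_xx − [H_xu H_xw] [[H_uu,H_uw],[H_uwᵀ,H_ww]]⁻¹ [H_xuᵀ; H_xwᵀ]`. -/
theorem stmt16 {n m d : ℕ}
    (A : Matrix (Fin n) (Fin n) ℝ) (B : Matrix (Fin n) (Fin m) ℝ)
    (E : Matrix (Fin n) (Fin d) ℝ)
    (Q : Matrix (Fin n) (Fin n) ℝ) (R : Matrix (Fin m) (Fin m) ℝ)
    (α lam : ℝ) (hα : α ∈ Set.Ioo (0 : ℝ) 1) (hlam : 0 < lam)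
    (hQ : Q.PosSemidef) (hR : R.PosDef)
    (P : Matrix (Fin n) (Fin n) ℝ) (hP : P.PosSemidef)
    (hpd : (lam • (1 : Matrix (Fin d) (Fin d) ℝ) - α • (Eᵀ * P * E)).PosDef)
    -- the blocks
    (Hxx : Matrix (Fin n) (Fin n) ℝ) (Hxu : Matrix (Fin n) (Fin m) ℝ)
    (Hxw : Matrix (Fin n) (Fin d) ℝ) (Huu : Matrix (Fin m) (Fin m) ℝ)
    (Huw : Matrix (Fin m) (Fin d) ℝ) (Hww : Matrix (Fin d) (Fin d) ℝ)
    (hHxx : Hxx = Q + α • (Aᵀ * P * A)) (hHxu : Hxu = α • (Aᵀ * P * B))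
    (hHxw : Hxw = α • (Aᵀ * P * E)) (hHuu : Huu = R + α • (Bᵀ * P * B))
    (hHuw : Huw = α • (Bᵀ * P * E))
    (hHww : Hww = α • (Eᵀ * P * E) - lam • (1 : Matrix (Fin d) (Fin d) ℝ))
    -- the gains
    (K : Matrix (Fin m) (Fin n) ℝ)
    (hK : K = (Huu - Huw * Hww⁻¹ * Huwᵀ)⁻¹ * (Huw * Hww⁻¹ * Hxwᵀ - Hxuᵀ))
    (L : Matrix (Fin d) (Fin n) ℝ)
    (hL : L = (Hww - Huwᵀ * Huu⁻¹ * Huw)⁻¹ * (Huwᵀ * Huu⁻¹ * Hxuᵀ - Hxwᵀ))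
    -- the full Q-function matrix and the stacked gain matrix
    (H : Matrix (Fin n ⊕ (Fin m ⊕ Fin d)) (Fin n ⊕ (Fin m ⊕ Fin d)) ℝ)
    (hH : H = fromBlocks Hxx (fromCols Hxu Hxw) (fromRows Hxuᵀ Hxwᵀ)
      (fromBlocks Huu Huw Huwᵀ Hww))
    (T : Matrix (Fin n ⊕ (Fin m ⊕ Fin d)) (Fin n) ℝ)
    (hT : T = fromRows (1 : Matrix (Fin n) (Fin n) ℝ) (fromRows K L)) :
    Tᵀ * H * T = Hxx - fromCols Hxu Hxw *
      (fromBlocks Huu Huw Huwᵀ Hww)⁻¹ * (fromCols Hxu Hxw)ᵀ := by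
  have hα0 : (0:ℝ) ≤ α := hα.1.le
  -- positive definiteness of the blocks
  have hHuuPD : Huu.PosDef := by
    rw [hHuu]
    exact hR.add_posSemidef (posSemidef_smul' hα0
      (by simpa [Matrix.conjTranspose_eq_transpose_of_trivial] using
        hP.conjTranspose_mul_mul_same B))
  have hnHww : (-Hww).PosDef := by rw [hHww, neg_sub]; exact hpd
  have hdetnHww : IsUnit (-Hww).det := (Matrix.isUnit_iff_isUnit_det _).mp hnHww.isUnit
  have hWinv : Hww⁻¹ = -(-Hww)⁻¹ := by
    apply Matrix.inv_eq_right_inv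
    rw [Matrix.mul_neg, ← Matrix.neg_mul, Matrix.mul_nonsing_inv _ hdetnHww]
  have hS1 : (Huu - Huw * Hww⁻¹ * Huwᵀ).PosDef := by
    have hrw : Huu - Huw * Hww⁻¹ * Huwᵀ = Huu + Huw * (-Hww)⁻¹ * Huwᵀ := by
      rw [hWinv, Matrix.mul_neg, Matrix.neg_mul, sub_neg_eq_add]
    rw [hrw]
    exact hHuuPD.add_posSemidef
      (by simpa [Matrix.conjTranspose_eq_transpose_of_trivial] using
        (hnHww.inv.posSemidef).mul_mul_conjTranspose_same Huw)
  have hS2 : (-(Hww - Huwᵀ * Huu⁻¹ * Huw)).PosDef := by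
    have hrw : -(Hww - Huwᵀ * Huu⁻¹ * Huw) = -Hww + Huwᵀ * Huu⁻¹ * Huw := by abel
    rw [hrw]
    exact hnHww.add_posSemidef
      (by simpa [Matrix.conjTranspose_eq_transpose_of_trivial] using
        (hHuuPD.inv.posSemidef).conjTranspose_mul_mul_same Huw)
  -- invertibility
  haveI iHuu : Invertible Huu := hHuuPD.isUnit.invertible
  haveI iHww : Invertible Hww := ((IsUnit.neg_iff _).mp hnHww.isUnit).invertible
  haveI iS1 : Invertible (Huu - Huw * Hww⁻¹ * Huwᵀ) := hS1.isUnit.invertible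
  haveI iS2 : Invertible (Hww - Huwᵀ * Huu⁻¹ * Huw) :=
    ((IsUnit.neg_iff _).mp hS2.isUnit).invertible
  have hs1 : Huu - Huw * Hww⁻¹ * Huwᵀ = Huu - Huw * ⅟Hww * Huwᵀ := by
    rw [Matrix.invOf_eq_nonsing_inv]
  have hs2 : Hww - Huwᵀ * Huu⁻¹ * Huw = Hww - Huwᵀ * ⅟Huu * Huw := by
    rw [Matrix.invOf_eq_nonsing_inv]
  -- the two defining equations of the gains
  have keyA := keyIdentity Huu (Huu - Huw * Hww⁻¹ * Huwᵀ) Huw Huwᵀ Hww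
    (Hww - Huwᵀ * Huu⁻¹ * Huw) hs1 hs2 Hxuᵀ Hxwᵀ
  have keyB := keyIdentity Hww (Hww - Huwᵀ * Huu⁻¹ * Huw) Huwᵀ Huw Huu
    (Huu - Huw * Hww⁻¹ * Huwᵀ) hs2 hs1 Hxwᵀ Hxuᵀ
  simp only [Matrix.invOf_eq_nonsing_inv] at keyA keyB
  have hGK1 : Huu * K + Huw * L = -Hxuᵀ := by rw [hK, hL]; exact keyA
  have hGK2 : Huwᵀ * K + Hww * L = -Hxwᵀ := by
    rw [hK, hL, add_comm]; exact keyB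
  -- the big block matrix
  set G := fromBlocks Huu Huw Huwᵀ Hww with hG
  haveI iG : Invertible G := by
    haveI : Invertible (Hww - Huwᵀ * ⅟Huu * Huw) := hs2 ▸ iS2
    exact Matrix.fromBlocks₁₁Invertible Huu Huw Huwᵀ Hww
  have hGdet : IsUnit G.det := (Matrix.isUnit_iff_isUnit_det G).mp (isUnit_of_invertible G)
  set S := fromRows K L with hSdef
  have hGS : G * S = -(fromCols Hxu Hxw)ᵀ := by
    rw [hG, hSdef, Matrix.fromBlocks_mul_fromRows, Matrix.transpose_fromCols,
      hGK1, hGK2]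
    ext (i | i) j <;> simp
  have hHT : H * T = fromRows (Hxx + fromCols Hxu Hxw * S) 0 := by
    rw [hH, hT, Matrix.fromBlocks_mul_fromRows, Matrix.mul_one, Matrix.mul_one, hGS,
      Matrix.transpose_fromCols, add_neg_cancel]
  have hTHT : Tᵀ * (H * T) = Hxx + fromCols Hxu Hxw * S := by
    rw [hHT, hT, Matrix.transpose_fromRows, Matrix.transpose_one,
      Matrix.fromCols_mul_fromRows, Matrix.one_mul, Matrix.mul_zero, add_zero]
  have hCt : (fromCols Hxu Hxw)ᵀ = -(G * S) := by rw [hGS, neg_neg]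
  have hCS : fromCols Hxu Hxw * G⁻¹ * (fromCols Hxu Hxw)ᵀ =
      -(fromCols Hxu Hxw * S) := by
    rw [hCt, Matrix.mul_neg, Matrix.mul_assoc, ← Matrix.mul_assoc G⁻¹ G S,
      Matrix.nonsing_inv_mul G hGdet, Matrix.one_mul]
  rw [Matrix.mul_assoc, hTHT, hCS, sub_neg_eq_add]
end
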